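/- arXiv:1812.02118 — 6 statements merged into one kernel-verified Lean document; each statement's English description precedes it below -/
import Mathlib

section
/- Let k be a field, R a commutative k-algebra, and π : N₁ → N₂ a surjective R-linear map, where N₁ is a weight module (N₁ equals the sum of its weight spaces). Then for every weight φ of R and every w ∈ N₂ with r • w = φ(r) • w for all r ∈ R, there exists v ∈ N₁ with r • v = φ(r) • v for all r ∈ R and π(v) = w; i.e. π maps N₁(φ) onto N₂(φ). (This is the content of the statement that the one-dimensional module k_φ = R / ker φ, on which every element has weight φ, is a projective object in the category of weight R-modules.) -/
/-- The weight space of an `R`-module `M` (with compatible `k`-action) attached to a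
weight `φ : R →ₐ[k] k`: the set of `m ∈ M` such that `r • m = φ r • m` for all `r`. -/
def weightSpace {k R M : Type*} [Field k] [CommRing R] [Algebra k R]
    [AddCommGroup M] [Module k M] [Module R M] [IsScalarTower k R M]
    (φ : R →ₐ[k] k) : Submodule k M where
  carrier := {m | ∀ r : R, r • m = φ r • m}
  add_mem' := by
    intro a b ha hb r
    simp only [smul_add, ha r, hb r]
  zero_mem' := by intro r; simp
  smul_mem' := by
    intro c m hm r
    calc r • (c • m) = r • ((algebraMap k R c) • m) := by rw [algebraMap_smul]
      _ = (r * algebraMap k R c) • m := (mul_smul _ _ _).symm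
      _ = ((algebraMap k R c) * r) • m := by rw [mul_comm]
      _ = (algebraMap k R c) • (r • m) := mul_smul _ _ _
      _ = c • (r • m) := by rw [algebraMap_smul]
      _ = c • (φ r • m) := by rw [hm r]
      _ = φ r • (c • m) := smul_comm c (φ r) m

section aux

variable {k R : Type*} [Field k] [CommRing R] [Algebra k R]

/-- The auxiliary operator `m ↦ c • (r • m - t • m)`, as a `k`-linear endomorphism. -/
private def weightOp (M : Type*) [AddCommGroup M] [Module k M] [Module R M]
    [IsScalarTower k R M] (r : R) (t c : k) : M →ₗ[k] M :=
  c • ((LinearMap.lsmul R M r).restrictScalars k - t • LinearMap.id)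

private lemma weightOp_apply {M : Type*} [AddCommGroup M] [Module k M] [Module R M]
    [IsScalarTower k R M] (r : R) (t c : k) (m : M) :
    weightOp M r t c m = c • (r • m - t • m) := rfl

private lemma weightOp_of_weight {M : Type*} [AddCommGroup M] [Module k M] [Module R M]
    [IsScalarTower k R M] (r : R) (t c : k) {χ : R →ₐ[k] k} {m : M}
    (hm : ∀ r' : R, r' • m = χ r' • m) :
    weightOp M r t c m = (c * (χ r - t)) • m := by
  rw [weightOp_apply, hm r, ← sub_smul, smul_smul]

private lemma lift_aux {N₁ N₂ : Type*}
    [AddCommGroup N₁] [Module k N₁] [Module R N₁] [IsScalarTower k R N₁]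
    [AddCommGroup N₂] [Module k N₂] [Module R N₂] [IsScalarTower k R N₂]
    (π : N₁ →ₗ[R] N₂) (φ : R →ₐ[k] k) (w : N₂) (hw : ∀ r : R, r • w = φ r • w) :
    ∀ s : Finset (R →ₐ[k] k), φ ∉ s → ∀ f : (R →ₐ[k] k) → N₁,
      (∀ ψ ∈ s, ∀ r : R, r • f ψ = ψ r • f ψ) →
      ∀ u : N₁, (∀ r : R, r • u = φ r • u) → π (u + ∑ ψ ∈ s, f ψ) = w →
      ∃ v : N₁, (∀ r : R, r • v = φ r • v) ∧ π v = w := by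
  classical
  have hπk : ∀ (c : k) (x : N₁), π (c • x) = c • π x := fun c x => by
    rw [← algebraMap_smul R c x, map_smul, algebraMap_smul]
  intro s
  induction s using Finset.induction_on with
  | empty =>
    intro _ f _ u hu hπu
    exact ⟨u, hu, by simpa using hπu⟩
  | @insert ψ₀ s hψ₀s ih =>
    intro hφ f hf u hu hπu
    have hψ₀φ : ψ₀ ≠ φ := fun h => hφ (h ▸ Finset.mem_insert_self ψ₀ s)
    have hφs : φ ∉ s := fun h => hφ (Finset.mem_insert_of_mem h)
    obtain ⟨r, hr⟩ : ∃ r : R, ψ₀ r ≠ φ r := by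
      by_contra h
      push_neg at h
      exact hψ₀φ (AlgHom.ext h)
    set c : k := (φ r - ψ₀ r)⁻¹ with hc
    have hcnz : φ r - ψ₀ r ≠ 0 := sub_ne_zero.mpr (Ne.symm hr)
    set E : N₁ →ₗ[k] N₁ := weightOp N₁ r (ψ₀ r) c with hE
    -- `E` fixes weight-`φ` vectors
    have hEφ : ∀ m : N₁, (∀ r' : R, r' • m = φ r' • m) → E m = m := by
      intro m hm
      rw [hE, weightOp_of_weight r (ψ₀ r) c hm, hc, inv_mul_cancel₀ hcnz, one_smul]
    -- `E` kills weight-`ψ₀` vectors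
    have hEψ₀ : E (f ψ₀) = 0 := by
      rw [hE, weightOp_of_weight r (ψ₀ r) c (hf ψ₀ (Finset.mem_insert_self ψ₀ s))]
      simp
    -- `E` preserves weight spaces
    have hEweight : ∀ ψ ∈ s, ∀ r' : R, r' • E (f ψ) = ψ r' • E (f ψ) := by
      intro ψ hψ r'
      rw [hE, weightOp_of_weight r (ψ₀ r) c (hf ψ (Finset.mem_insert_of_mem hψ))]
      have hfψ := hf ψ (Finset.mem_insert_of_mem hψ)
      rw [smul_comm (r' : R) (c * (ψ r - ψ₀ r)) (f ψ), hfψ r', smul_comm]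
    -- `π` intertwines `E` with the corresponding operator on `N₂`, and `w` is fixed
    have hπE : ∀ x : N₁, π (E x) = weightOp N₂ r (ψ₀ r) c (π x) := by
      intro x
      rw [hE, weightOp_apply, weightOp_apply, hπk, map_sub, map_smul]
      rw [show (ψ₀ r : k) • x = (ψ₀ r) • x from rfl]
      congr 1
      congr 1
      rw [← algebraMap_smul R (ψ₀ r) x, map_smul, algebraMap_smul]
    have hEw : weightOp N₂ r (ψ₀ r) c w = w := by
      rw [weightOp_of_weight r (ψ₀ r) c hw, hc, inv_mul_cancel₀ hcnz, one_smul]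
    -- apply the induction hypothesis to `E u + ∑ ψ ∈ s, E (f ψ)`
    refine ih hφs (fun ψ => E (f ψ)) hEweight u hu ?_
    have key : u + ∑ ψ ∈ s, E (f ψ) = E (u + ∑ ψ ∈ Insert.insert ψ₀ s, f ψ) := by
      rw [map_add, hEφ u hu, map_sum, Finset.sum_insert hψ₀s, hEψ₀, zero_add]
    rw [key, hπE, hπu, hEw]

end aux

/-- Lemma 1.3.1 (projectivity of `k_φ` in the category of weight `R`-modules): a surjective
`R`-linear map from a weight module maps each weight space onto the corresponding weight
space of the target. -/
theorem weight_vector_lifts_of_surjective {k R N₁ N₂ : Type*} [Field k] [CommRing R]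
    [Algebra k R]
    [AddCommGroup N₁] [Module k N₁] [Module R N₁] [IsScalarTower k R N₁]
    [AddCommGroup N₂] [Module k N₂] [Module R N₂] [IsScalarTower k R N₂]
    (π : N₁ →ₗ[R] N₂) (hπ : Function.Surjective π)
    (hN₁ : (⨆ φ : R →ₐ[k] k, (weightSpace φ : Submodule k N₁)) = ⊤) :
    ∀ (φ : R →ₐ[k] k) (w : N₂), (∀ r : R, r • w = φ r • w) →
      ∃ v : N₁, (∀ r : R, r • v = φ r • v) ∧ π v = w := by
  classical
  intro φ w hw
  obtain ⟨u₀, hu₀⟩ := hπ w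
  have hu₀mem : u₀ ∈ (⨆ ψ : R →ₐ[k] k, (weightSpace ψ : Submodule k N₁)) := by
    rw [hN₁]; trivial
  obtain ⟨s, hs⟩ := Submodule.exists_finset_of_mem_iSup _ hu₀mem
  obtain ⟨μ, hμ⟩ := (Submodule.mem_iSup_finset_iff_exists_sum _ _).mp hs
  have hμw : ∀ ψ, ∀ r : R, r • (μ ψ : N₁) = ψ r • (μ ψ : N₁) := fun ψ => (μ ψ).2
  by_cases hφs : φ ∈ s
  · refine lift_aux π φ w hw (s.erase φ) (Finset.notMem_erase φ s)
      (fun ψ => (μ ψ : N₁)) (fun ψ _ => hμw ψ) (μ φ : N₁) (hμw φ) ?_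
    show π ((μ φ : N₁) + ∑ ψ ∈ s.erase φ, (μ ψ : N₁)) = w
    rw [Finset.add_sum_erase s (fun ψ => (μ ψ : N₁)) hφs, hμ, hu₀]
  · refine lift_aux π φ w hw s hφs (fun ψ => (μ ψ : N₁)) (fun ψ _ => hμw ψ) 0
      (by simp) ?_
    show π (0 + ∑ ψ ∈ s, (μ ψ : N₁)) = w
    rw [zero_add, hμ, hu₀]
end

section
/- Let k be a field, and let A₁, A₂ be associative unital k-algebras with commutative k-subalgebras R₁ ⊆ A₁ and R₂ ⊆ A₂. For i = 1, 2 let S_i be a simple left A_i-module which, as an R_i-module, equals the sum of its weight spaces, and such that every weight space S_i(φ), φ : R_i →ₐ[k] k, has k-dimension at most 1. Then the tensor product S₁ ⊗[k] S₂, with its natural A₁ ⊗[k] A₂-module structure given by (a₁ ⊗ a₂) • (s₁ ⊗ s₂) = (a₁ • s₁) ⊗ (a₂ • s₂), is a simple A₁ ⊗[k] A₂-module. (This is the two-factor case of the statement for an n-fold tensor product.) -/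
/-- The weight space attached to a weight `φ : R →ₐ[k] k` of a commutative subalgebra
`R` of `A`, inside an `A`-module `M` (made an `R`-module by restriction of scalars). -/
def subWeightSpace {k A M : Type*} [Field k] [Ring A] [Algebra k A]
    [AddCommGroup M] [Module A M] [Module k M] [IsScalarTower k A M]
    {R : Subalgebra k A} (φ : R →ₐ[k] k) : Submodule k M where
  carrier := {m | ∀ r : R, (r : A) • m = φ r • m}
  add_mem' := by intro a b ha hb r; simp only [smul_add, ha r, hb r]
  zero_mem' := by intro r; simp
  smul_mem' := by
    intro c m hm r
    calc (r : A) • (c • m) = (r : A) • ((algebraMap k A c) • m) := by rw [algebraMap_smul]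
      _ = ((r : A) * algebraMap k A c) • m := (mul_smul _ _ _).symm
      _ = ((algebraMap k A c) * (r : A)) • m := by rw [← Algebra.commutes]
      _ = (algebraMap k A c) • ((r : A) • m) := mul_smul _ _ _
      _ = c • ((r : A) • m) := by rw [algebraMap_smul]
      _ = c • (φ r • m) := by rw [hm r]
      _ = φ r • (c • m) := smul_comm c (φ r) m

open TensorProduct in
/-- The natural `A₁ ⊗[k] A₂`-module structure on `S₁ ⊗[k] S₂`, with
`(a₁ ⊗ a₂) • (s₁ ⊗ s₂) = (a₁ • s₁) ⊗ (a₂ • s₂)`. -/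
noncomputable instance tensorTensorModule {k A₁ A₂ S₁ S₂ : Type*} [Field k]
    [Ring A₁] [Algebra k A₁] [Ring A₂] [Algebra k A₂]
    [AddCommGroup S₁] [Module A₁ S₁] [Module k S₁] [IsScalarTower k A₁ S₁]
    [AddCommGroup S₂] [Module A₂ S₂] [Module k S₂] [IsScalarTower k A₂ S₂] :
    Module (A₁ ⊗[k] A₂) (S₁ ⊗[k] S₂) :=
  haveI : SMulCommClass A₁ k S₁ := SMulCommClass.symm _ _ _
  haveI : SMulCommClass A₂ k S₂ := SMulCommClass.symm _ _ _
  Module.compHom _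
    ((Module.endTensorEndAlgHom (R := k) (S := k) (A := k) (M := S₁) (N := S₂)).comp
      (Algebra.TensorProduct.map
        (Algebra.lsmul k k S₁ (A := A₁)) (Algebra.lsmul k k S₂ (A := A₂)))).toRingHom

open TensorProduct in
/-- Lemma 1.5.3 (two-factor case): the tensor product of simple weight modules whose weight
spaces are at most one-dimensional is a simple module over the tensor product algebra. -/
theorem isSimpleModule_tensorProduct {k A₁ A₂ S₁ S₂ : Type*} [Field k]
    [Ring A₁] [Algebra k A₁] [Ring A₂] [Algebra k A₂]
    [AddCommGroup S₁] [Module A₁ S₁] [Module k S₁] [IsScalarTower k A₁ S₁]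
    [AddCommGroup S₂] [Module A₂ S₂] [Module k S₂] [IsScalarTower k A₂ S₂]
    (R₁ : Subalgebra k A₁) (hR₁ : ∀ r s : R₁, r * s = s * r)
    (R₂ : Subalgebra k A₂) (hR₂ : ∀ r s : R₂, r * s = s * r)
    [IsSimpleModule A₁ S₁] [IsSimpleModule A₂ S₂]
    (hw₁ : (⨆ φ : R₁ →ₐ[k] k, (subWeightSpace (R := R₁) φ : Submodule k S₁)) = ⊤)
    (hw₂ : (⨆ φ : R₂ →ₐ[k] k, (subWeightSpace (R := R₂) φ : Submodule k S₂)) = ⊤)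
    (hd₁ : ∀ φ : R₁ →ₐ[k] k, Module.rank k (subWeightSpace (R := R₁) φ : Submodule k S₁) ≤ 1)
    (hd₂ : ∀ φ : R₂ →ₐ[k] k, Module.rank k (subWeightSpace (R := R₂) φ : Submodule k S₂) ≤ 1)
    (hsmul : ∀ (a₁ : A₁) (a₂ : A₂) (s₁ : S₁) (s₂ : S₂),
      (a₁ ⊗ₜ[k] a₂) • (s₁ ⊗ₜ[k] s₂) = (a₁ • s₁) ⊗ₜ[k] (a₂ • s₂)) :
    IsSimpleModule (A₁ ⊗[k] A₂) (S₁ ⊗[k] S₂) := by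
  classical
  -- `algebraMap k (A₁ ⊗ A₂)` acts as the `k`-scalar action
  have halg : ∀ (c : k) (x : S₁ ⊗[k] S₂), (algebraMap k (A₁ ⊗[k] A₂) c) • x = c • x := by
    intro c x
    have h1 : algebraMap k (A₁ ⊗[k] A₂) c = (algebraMap k A₁ c) ⊗ₜ[k] (1 : A₂) := rfl
    rw [h1]
    induction x using TensorProduct.induction_on with
    | zero => simp
    | tmul s₁ s₂ => rw [hsmul, algebraMap_smul, one_smul, smul_tmul']
    | add x y hx hy => rw [smul_add, smul_add, hx, hy]
  have hcomm : ∀ (u : A₁ ⊗[k] A₂) (c : k) (x : S₁ ⊗[k] S₂), u • (c • x) = c • (u • x) := by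
    intro u c x
    rw [← halg c x, ← mul_smul, ← Algebra.commutes c u, mul_smul, halg]
  -- a nonzero pure tensor is nonzero
  have htmul_ne : ∀ (v : S₁) (w : S₂), v ≠ 0 → w ≠ 0 → v ⊗ₜ[k] w ≠ (0 : S₁ ⊗[k] S₂) := by
    intro v w hv hw
    obtain ⟨g₁, hg₁⟩ : ∃ g : Module.Dual k S₁, g v ≠ 0 := by
      by_contra h
      push_neg at h
      exact hv ((Module.forall_dual_apply_eq_zero_iff k v).mp h)
    obtain ⟨g₂, hg₂⟩ : ∃ g : Module.Dual k S₂, g w ≠ 0 := by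
      by_contra h
      push_neg at h
      exact hw ((Module.forall_dual_apply_eq_zero_iff k w).mp h)
    intro h0
    have := congrArg ((TensorProduct.lid k k).toLinearMap.comp (TensorProduct.map g₁ g₂)) h0
    simp only [LinearMap.comp_apply, TensorProduct.map_tmul, map_zero,
      LinearEquiv.coe_coe, TensorProduct.lid_tmul] at this
    exact (mul_ne_zero hg₁ hg₂) (by simpa [smul_eq_mul] using this)
  -- choose a generator of each weight space of S₁
  have he : ∀ φ : R₁ →ₐ[k] k, ∃ v : S₁, v ∈ subWeightSpace (R := R₁) φ ∧
      ∀ w ∈ subWeightSpace (R := R₁) φ, ∃ c : k, c • v = w := by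
    intro φ
    obtain ⟨v₀, hv₀⟩ := rank_le_one_iff.mp (hd₁ φ)
    refine ⟨v₀, v₀.2, fun w hw => ?_⟩
    obtain ⟨c, hc⟩ := hv₀ ⟨w, hw⟩
    exact ⟨c, congrArg Subtype.val hc⟩
  choose e he₁ he₂ using he
  have hspan : Submodule.span k (Set.range e) = (⊤ : Submodule k S₁) := by
    rw [eq_top_iff, ← hw₁]
    refine iSup_le fun φ => ?_
    intro w hw
    obtain ⟨c, hc⟩ := he₂ φ w hw
    exact hc ▸ Submodule.smul_mem _ _ (Submodule.subset_span ⟨φ, rfl⟩)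
  -- every element of the tensor product is a sum of `e φ ⊗ w φ`
  set L : ((R₁ →ₐ[k] k) →₀ S₂) →ₗ[k] S₁ ⊗[k] S₂ :=
    Finsupp.lsum k (fun φ => TensorProduct.mk k S₁ S₂ (e φ)) with hL
  have hLsurj : ∀ t : S₁ ⊗[k] S₂, ∃ f, L f = t := by
    have : (⊤ : Submodule k (S₁ ⊗[k] S₂)) ≤ LinearMap.range L := by
      rw [← TensorProduct.span_tmul_eq_top k S₁ S₂, Submodule.span_le]
      rintro _ ⟨x, y, rfl⟩
      have hx : x ∈ Submodule.span k (Set.range e) := hspan ▸ Submodule.mem_top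
      have : x ⊗ₜ[k] y = ((TensorProduct.mk k S₁ S₂).flip y) x := rfl
      rw [this]
      have hmap := Submodule.mem_map_of_mem (f := (TensorProduct.mk k S₁ S₂).flip y) hx
      rw [Submodule.map_span] at hmap
      refine Submodule.span_le.mpr ?_ hmap
      rintro _ ⟨_, ⟨φ, rfl⟩, rfl⟩
      exact ⟨Finsupp.single φ y, by simp [hL]⟩
    intro t
    exact this Submodule.mem_top
  -- S₁ and S₂ are generated by any nonzero element
  have hgen₁ : ∀ (v : S₁), v ≠ 0 → ∀ s : S₁, ∃ a : A₁, a • v = s := by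
    intro v hv s
    have hsp : Submodule.span A₁ {v} = ⊤ := by
      rcases eq_bot_or_eq_top (Submodule.span A₁ {v}) with h | h
      · exact absurd (Submodule.span_singleton_eq_bot.mp h) hv
      · exact h
    exact Submodule.mem_span_singleton.mp (hsp ▸ Submodule.mem_top (x := s))
  have hgen₂ : ∀ (w : S₂), w ≠ 0 → ∀ s : S₂, ∃ a : A₂, a • w = s := by
    intro w hw s
    have hsp : Submodule.span A₂ {w} = ⊤ := by
      rcases eq_bot_or_eq_top (Submodule.span A₂ {w}) with h | h
      · exact absurd (Submodule.span_singleton_eq_bot.mp h) hw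
      · exact h
    exact Submodule.mem_span_singleton.mp (hsp ▸ Submodule.mem_top (x := s))
  -- key step : every nonzero submodule is everything
  have key : ∀ N : Submodule (A₁ ⊗[k] A₂) (S₁ ⊗[k] S₂), N ≠ ⊥ → N = ⊤ := by
    intro N hN
    have hNk : ∀ (c : k) (x : S₁ ⊗[k] S₂), x ∈ N → c • x ∈ N := by
      intro c x hx
      rw [← halg]
      exact N.smul_mem _ hx
    obtain ⟨t, htN, ht0⟩ := Submodule.exists_mem_ne_zero_of_ne_bot hN
    obtain ⟨f, hLf⟩ := hLsurj t
    set s : Finset (R₁ →ₐ[k] k) := f.support.filter (fun φ => e φ ≠ 0) with hs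
    have ht' : t = ∑ φ ∈ s, e φ ⊗ₜ[k] f φ := by
      rw [← hLf, hL, Finsupp.lsum_apply, Finsupp.sum]
      refine (Finset.sum_subset (Finset.filter_subset _ _) ?_).symm
      intro φ hφ hφs
      have : e φ = 0 := by
        by_contra h
        exact hφs (Finset.mem_filter.mpr ⟨hφ, h⟩)
      simp [this]
    have hs_ne : s.Nonempty := by
      rcases Finset.eq_empty_or_nonempty s with h | h
      · rw [h, Finset.sum_empty] at ht'; exact absurd ht' ht0
      · exact h
    obtain ⟨φ₀, hφ₀⟩ := hs_ne
    -- separating elements of R₁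
    have hsep : ∀ ψ ∈ s.erase φ₀, ∃ rr : R₁, φ₀ rr ≠ ψ rr := by
      intro ψ hψ
      have hne : φ₀ ≠ ψ := fun h => (Finset.ne_of_mem_erase hψ) h.symm
      by_contra h
      push_neg at h
      exact hne (AlgHom.ext fun rr => h rr)
    choose! r hr using hsep
    set u : (R₁ →ₐ[k] k) → A₁ ⊗[k] A₂ :=
      fun ψ => ((r ψ : A₁) ⊗ₜ[k] (1 : A₂)) - algebraMap k (A₁ ⊗[k] A₂) (ψ (r ψ)) with hu
    -- `u ψ` acts on a weight tensor by a scalar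
    have hact : ∀ (ψ φ : R₁ →ₐ[k] k) (w : S₂),
        u ψ • (e φ ⊗ₜ[k] w) = (φ (r ψ) - ψ (r ψ)) • (e φ ⊗ₜ[k] w) := by
      intro ψ φ w
      rw [hu, sub_smul, halg, hsmul, one_smul, he₁ φ (r ψ), ← smul_tmul', ← sub_smul]
    have hprod : ∀ (l : List (R₁ →ₐ[k] k)) (φ : R₁ →ₐ[k] k) (w : S₂),
        ((l.map u).prod) • (e φ ⊗ₜ[k] w)
          = ((l.map fun ψ => (φ (r ψ) - ψ (r ψ))).prod) • (e φ ⊗ₜ[k] w) := by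
      intro l φ w
      induction l with
      | nil => simp
      | cons a l' ih =>
        rw [List.map_cons, List.map_cons, List.prod_cons, List.prod_cons, mul_smul, ih,
          hcomm, hact, smul_smul, mul_comm]
    set lψ : List (R₁ →ₐ[k] k) := (s.erase φ₀).toList with hlψ
    set P : A₁ ⊗[k] A₂ := (lψ.map u).prod with hP
    set c : k := (lψ.map fun ψ => (φ₀ (r ψ) - ψ (r ψ))).prod with hc
    have hc0 : c ≠ 0 := by
      rw [hc]
      refine List.prod_ne_zero fun h0 => ?_
      obtain ⟨ψ, hψ, hψ0⟩ := List.mem_map.mp h0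
      exact sub_ne_zero.mpr (hr ψ (Finset.mem_toList.mp hψ)) hψ0
    have hPt : P • t = c • (e φ₀ ⊗ₜ[k] f φ₀) := by
      rw [ht', Finset.smul_sum]
      rw [Finset.sum_eq_single φ₀]
      · exact hprod _ _ _
      · intro φ hφ hφne
        rw [hprod]
        have hmem : φ ∈ s.erase φ₀ := Finset.mem_erase.mpr ⟨hφne, hφ⟩
        have h0 : (0 : k) ∈ lψ.map fun ψ => (φ (r ψ) - ψ (r ψ)) :=
          List.mem_map.mpr ⟨φ, Finset.mem_toList.mpr hmem, by simp⟩
        rw [List.prod_eq_zero h0, zero_smul]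
      · intro h; exact absurd hφ₀ h
    -- a nonzero pure tensor lies in N
    have hvw : e φ₀ ⊗ₜ[k] f φ₀ ∈ N := by
      have h1 : c • (e φ₀ ⊗ₜ[k] f φ₀) ∈ N := hPt ▸ N.smul_mem P htN
      have := hNk c⁻¹ _ h1
      rwa [smul_smul, inv_mul_cancel₀ hc0, one_smul] at this
    have hv0 : e φ₀ ≠ 0 := (Finset.mem_filter.mp hφ₀).2
    have hw0 : f φ₀ ≠ 0 := Finsupp.mem_support_iff.mp (Finset.mem_filter.mp hφ₀).1
    -- conclude N = ⊤
    rw [eq_top_iff]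
    intro z hz
    clear hz
    induction z using TensorProduct.induction_on with
    | zero => exact N.zero_mem
    | tmul s₁ s₂ =>
      obtain ⟨a₁, ha₁⟩ := hgen₁ _ hv0 s₁
      obtain ⟨a₂, ha₂⟩ := hgen₂ _ hw0 s₂
      have : (a₁ ⊗ₜ[k] a₂) • (e φ₀ ⊗ₜ[k] f φ₀) = s₁ ⊗ₜ[k] s₂ := by
        rw [hsmul, ha₁, ha₂]
      exact this ▸ N.smul_mem _ hvw
    | add x y hx hy => exact N.add_mem hx hy
  -- nontriviality
  have hnt₁ := IsSimpleModule.nontrivial A₁ S₁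
  have hnt₂ := IsSimpleModule.nontrivial A₂ S₂
  obtain ⟨v, hv⟩ := exists_ne (0 : S₁)
  obtain ⟨w, hw⟩ := exists_ne (0 : S₂)
  haveI : Nontrivial (Submodule (A₁ ⊗[k] A₂) (S₁ ⊗[k] S₂)) := by
    refine ⟨⊥, ⊤, fun h => ?_⟩
    have : v ⊗ₜ[k] w ∈ (⊥ : Submodule (A₁ ⊗[k] A₂) (S₁ ⊗[k] S₂)) := h ▸ Submodule.mem_top
    exact htmul_ne v w hv hw (Submodule.mem_bot _ |>.mp this)
  haveI : IsSimpleOrder (Submodule (A₁ ⊗[k] A₂) (S₁ ⊗[k] S₂)) :=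
    ⟨fun N => or_iff_not_imp_left.mpr (key N)⟩
  exact ⟨⟩
end

section
/- In the Akhavizadegan–Jordan quantized Weyl algebra 𝒜ₙ^{q,Λ}, the elements z_i = x_i y_i − y_i x_i satisfy: z_i x_j = x_j z_i and z_i y_j = y_j z_i for all i ≠ j; q_i · (z_i x_i) = x_i z_i (equivalently z_i x_i = q_i^{-1} x_i z_i) and z_i y_i = q_i · (y_i z_i) for all i; and z_i z_j = z_j z_i for all i, j. In particular each z_i is a normal element of 𝒜ₙ^{q,Λ}. -/
/-! The Akhavizadegan–Jordan quantized Weyl algebra `𝒜ₙ^{q,Λ}`, realized as a `RingQuot`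
of the free algebra on generators `x₁, …, xₙ, y₁, …, yₙ`. -/

/-- `x_i` in the free algebra. -/
def fX (k : Type*) [Field k] (n : ℕ) (i : Fin n) : FreeAlgebra k (Fin n ⊕ Fin n) :=
  FreeAlgebra.ι k (Sum.inl i)

/-- `y_i` in the free algebra. -/
def fY (k : Type*) [Field k] (n : ℕ) (i : Fin n) : FreeAlgebra k (Fin n ⊕ Fin n) :=
  FreeAlgebra.ι k (Sum.inr i)

/-- The defining relations of the Akhavizadegan–Jordan quantized Weyl algebra. -/
inductive AJRel (k : Type*) [Field k] (n : ℕ) (q : Fin n → k) (Λ : Fin n → Fin n → k) :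
    FreeAlgebra k (Fin n ⊕ Fin n) → FreeAlgebra k (Fin n ⊕ Fin n) → Prop
  | xx {i j : Fin n} : i < j →
      AJRel k n q Λ (fX k n i * fX k n j) (Λ i j • (fX k n j * fX k n i))
  | yy {i j : Fin n} : i < j →
      AJRel k n q Λ (fY k n i * fY k n j) (Λ i j • (fY k n j * fY k n i))
  | xy {i j : Fin n} : i < j →
      AJRel k n q Λ (fX k n i * fY k n j) ((Λ i j)⁻¹ • (fY k n j * fX k n i))
  | yx {i j : Fin n} : i < j →
      AJRel k n q Λ (fY k n i * fX k n j) ((Λ i j)⁻¹ • (fX k n j * fY k n i))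
  | xyi (i : Fin n) :
      AJRel k n q Λ (fX k n i * fY k n i) (q i • (fY k n i * fX k n i) + 1)

/-- The Akhavizadegan–Jordan quantized Weyl algebra `𝒜ₙ^{q,Λ}`. -/
abbrev AJWeyl (k : Type*) [Field k] (n : ℕ) (q : Fin n → k) (Λ : Fin n → Fin n → k) :=
  RingQuot (AJRel k n q Λ)

/-- The generator `x_i` of `𝒜ₙ^{q,Λ}`. -/
def ajX (k : Type*) [Field k] (n : ℕ) (q : Fin n → k) (Λ : Fin n → Fin n → k) (i : Fin n) :
    AJWeyl k n q Λ :=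
  RingQuot.mkAlgHom k (AJRel k n q Λ) (fX k n i)

/-- The generator `y_i` of `𝒜ₙ^{q,Λ}`. -/
def ajY (k : Type*) [Field k] (n : ℕ) (q : Fin n → k) (Λ : Fin n → Fin n → k) (i : Fin n) :
    AJWeyl k n q Λ :=
  RingQuot.mkAlgHom k (AJRel k n q Λ) (fY k n i)

/-- The element `z_i = x_i y_i - y_i x_i` of `𝒜ₙ^{q,Λ}`. -/
def ajZ (k : Type*) [Field k] (n : ℕ) (q : Fin n → k) (Λ : Fin n → Fin n → k) (i : Fin n) :
    AJWeyl k n q Λ :=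
  ajX k n q Λ i * ajY k n q Λ i - ajY k n q Λ i * ajX k n q Λ i

section aux
variable {k : Type*} [Field k] {n : ℕ} (q : Fin n → k) (Λ : Fin n → Fin n → k)

local notation "X" => ajX k n q Λ
local notation "Y" => ajY k n q Λ
local notation "Z" => ajZ k n q Λ

lemma aj_xx (hΛs : ∀ i j, Λ i j * Λ j i = 1) {i j : Fin n} (h : i ≠ j) :
    X i * X j = Λ i j • (X j * X i) := by
  rcases h.lt_or_gt with h | h
  · unfold ajX
    rw [← map_mul, RingQuot.mkAlgHom_rel k (AJRel.xx h), map_smul, map_mul]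
  · have h2 : X j * X i = Λ j i • (X i * X j) := by
      unfold ajX
      rw [← map_mul, RingQuot.mkAlgHom_rel k (AJRel.xx h), map_smul, map_mul]
    rw [h2, smul_smul, hΛs, one_smul]

lemma aj_yy (hΛs : ∀ i j, Λ i j * Λ j i = 1) {i j : Fin n} (h : i ≠ j) :
    Y i * Y j = Λ i j • (Y j * Y i) := by
  rcases h.lt_or_gt with h | h
  · unfold ajY
    rw [← map_mul, RingQuot.mkAlgHom_rel k (AJRel.yy h), map_smul, map_mul]
  · have h2 : Y j * Y i = Λ j i • (Y i * Y j) := by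
      unfold ajY
      rw [← map_mul, RingQuot.mkAlgHom_rel k (AJRel.yy h), map_smul, map_mul]
    rw [h2, smul_smul, hΛs, one_smul]

lemma aj_xy (hΛs : ∀ i j, Λ i j * Λ j i = 1) {i j : Fin n} (h : i ≠ j) :
    X i * Y j = (Λ i j)⁻¹ • (Y j * X i) := by
  rcases h.lt_or_gt with h | h
  · unfold ajX ajY
    rw [← map_mul, RingQuot.mkAlgHom_rel k (AJRel.xy h), map_smul, map_mul]
  · have h2 : Y j * X i = (Λ j i)⁻¹ • (X i * Y j) := by
      unfold ajX ajY
      rw [← map_mul, RingQuot.mkAlgHom_rel k (AJRel.yx h), map_smul, map_mul]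
    rw [h2, smul_smul, ← mul_inv, mul_comm, hΛs, inv_one, one_smul]

lemma aj_yx (hΛs : ∀ i j, Λ i j * Λ j i = 1) {i j : Fin n} (h : i ≠ j) :
    Y i * X j = (Λ i j)⁻¹ • (X j * Y i) := by
  rcases h.lt_or_gt with h | h
  · unfold ajX ajY
    rw [← map_mul, RingQuot.mkAlgHom_rel k (AJRel.yx h), map_smul, map_mul]
  · have h2 : X j * Y i = (Λ j i)⁻¹ • (Y i * X j) := by
      unfold ajX ajY
      rw [← map_mul, RingQuot.mkAlgHom_rel k (AJRel.xy h), map_smul, map_mul]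
    rw [h2, smul_smul, ← mul_inv, mul_comm, hΛs, inv_one, one_smul]

lemma aj_xyi (i : Fin n) : X i * Y i = q i • (Y i * X i) + 1 := by
  unfold ajX ajY
  rw [← map_mul, RingQuot.mkAlgHom_rel k (AJRel.xyi i), map_add, map_smul, map_mul, map_one]

lemma aj_z (i : Fin n) : Z i = (q i - 1) • (Y i * X i) + 1 := by
  unfold ajZ
  rw [aj_xyi]
  module

lemma aj_wx (hΛ : ∀ i j, Λ i j ≠ 0) (hΛs : ∀ i j, Λ i j * Λ j i = 1) {i j : Fin n}
    (h : i ≠ j) : Y i * X i * X j = X j * (Y i * X i) := by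
  rw [mul_assoc, aj_xx q Λ hΛs h, mul_smul_comm, ← mul_assoc, aj_yx q Λ hΛs h,
    smul_mul_assoc, smul_smul, mul_inv_cancel₀ (hΛ i j), one_smul, mul_assoc]

lemma aj_wy (hΛ : ∀ i j, Λ i j ≠ 0) (hΛs : ∀ i j, Λ i j * Λ j i = 1) {i j : Fin n}
    (h : i ≠ j) : Y i * X i * Y j = Y j * (Y i * X i) := by
  rw [mul_assoc, aj_xy q Λ hΛs h, mul_smul_comm, ← mul_assoc, aj_yy q Λ hΛs h,
    smul_mul_assoc, smul_smul, inv_mul_cancel₀ (hΛ i j), one_smul, mul_assoc]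

end aux

/-- Proposition 2.2.5: the elements `z_i` of `𝒜ₙ^{q,Λ}` are normal; explicitly,
`z_i x_j = x_j z_i` and `z_i y_j = y_j z_i` for `i ≠ j`, `z_i x_i = q_i⁻¹ x_i z_i`
(i.e. `q_i • (z_i x_i) = x_i z_i`) and `z_i y_i = q_i • (y_i z_i)`, and the `z_i`
pairwise commute. -/
theorem ajZ_relations {k : Type*} [Field k] {n : ℕ} (q : Fin n → k) (Λ : Fin n → Fin n → k)
    (hq : ∀ i, q i ≠ 0) (hΛ : ∀ i j, Λ i j ≠ 0) (hΛd : ∀ i, Λ i i = 1)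
    (hΛs : ∀ i j, Λ i j * Λ j i = 1) :
    (∀ i j : Fin n, i ≠ j →
        ajZ k n q Λ i * ajX k n q Λ j = ajX k n q Λ j * ajZ k n q Λ i ∧
        ajZ k n q Λ i * ajY k n q Λ j = ajY k n q Λ j * ajZ k n q Λ i) ∧
    (∀ i : Fin n,
        q i • (ajZ k n q Λ i * ajX k n q Λ i) = ajX k n q Λ i * ajZ k n q Λ i ∧
        ajZ k n q Λ i * ajY k n q Λ i = q i • (ajY k n q Λ i * ajZ k n q Λ i)) ∧
    (∀ i j : Fin n, ajZ k n q Λ i * ajZ k n q Λ j = ajZ k n q Λ j * ajZ k n q Λ i) := by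
  have hZX : ∀ i j : Fin n, i ≠ j →
      ajZ k n q Λ i * ajX k n q Λ j = ajX k n q Λ j * ajZ k n q Λ i := by
    intro i j h
    rw [aj_z, add_mul, mul_add, one_mul, mul_one, smul_mul_assoc, mul_smul_comm,
      aj_wx q Λ hΛ hΛs h]
  have hZY : ∀ i j : Fin n, i ≠ j →
      ajZ k n q Λ i * ajY k n q Λ j = ajY k n q Λ j * ajZ k n q Λ i := by
    intro i j h
    rw [aj_z, add_mul, mul_add, one_mul, mul_one, smul_mul_assoc, mul_smul_comm,
      aj_wy q Λ hΛ hΛs h]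
  refine ⟨fun i j h => ⟨hZX i j h, hZY i j h⟩, fun i => ⟨?_, ?_⟩, fun i j => ?_⟩
  · have hXw : ajX k n q Λ i * (ajY k n q Λ i * ajX k n q Λ i)
        = q i • (ajY k n q Λ i * ajX k n q Λ i * ajX k n q Λ i) + ajX k n q Λ i := by
      rw [← mul_assoc, aj_xyi, add_mul, one_mul, smul_mul_assoc]
    rw [aj_z, add_mul, mul_add, one_mul, mul_one, smul_mul_assoc, mul_smul_comm, hXw]
    module
  · have hwY : ajY k n q Λ i * ajX k n q Λ i * ajY k n q Λ i
        = q i • (ajY k n q Λ i * (ajY k n q Λ i * ajX k n q Λ i)) + ajY k n q Λ i := by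
      rw [mul_assoc, aj_xyi, mul_add, mul_one, mul_smul_comm]
    rw [aj_z, add_mul, mul_add, one_mul, mul_one, smul_mul_assoc, mul_smul_comm, hwY]
    module
  · rcases eq_or_ne i j with rfl | h
    · rfl
    have key : ajZ k n q Λ i * (ajY k n q Λ j * ajX k n q Λ j)
        = ajY k n q Λ j * ajX k n q Λ j * ajZ k n q Λ i := by
      rw [← mul_assoc, hZY i j h, mul_assoc, hZX i j h, mul_assoc]
    rw [aj_z q Λ j, add_mul, mul_add, one_mul, mul_one, smul_mul_assoc, mul_smul_comm, key]
end

section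
/- Assume q_i ≠ 1 for all i. Then the elements z₁, …, zₙ of the Akhavizadegan–Jordan quantized Weyl algebra 𝒜ₙ^{q,Λ} are algebraically independent over k: the k-algebra homomorphism MvPolynomial (Fin n) k → 𝒜ₙ^{q,Λ} sending the i-th variable to z_i is injective. -/
noncomputable section
set_option synthInstance.maxHeartbeats 1000000
set_option maxHeartbeats 1600000
namespace AJP
open Finsupp

variable {k : Type*} [Field k] {n : ℕ}

abbrev KK (k : Type*) [Field k] (n : ℕ) := FractionRing (MvPolynomial (Fin n) k)
abbrev VV (k : Type*) [Field k] (n : ℕ) := (Fin n → ℤ) →₀ KK k n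

def γK (k : Type*) [Field k] (n : ℕ) (i : Fin n) : KK k n :=
  algebraMap (MvPolynomial (Fin n) k) _ (MvPolynomial.X i)

def ι' (k : Type*) [Field k] (n : ℕ) (a : k) : KK k n := algebraMap k _ a

lemma ι'_inj : Function.Injective (ι' k n) := by
  have : Function.Injective (algebraMap k (KK k n)) := RingHom.injective _
  exact this

lemma ι'_ne_zero {a : k} (ha : a ≠ 0) : ι' k n a ≠ 0 := by
  intro h
  exact ha (ι'_inj (n:=n) (h.trans (by simp [ι']) : ι' k n a = ι' k n 0))

lemma ι'_eq (a : k) : algebraMap k (KK k n) a = ι' k n a := rfl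

lemma ι'_ne_one {a : k} (ha : a ≠ 1) : ι' k n a ≠ 1 := by
  intro h
  exact ha (ι'_inj (n:=n) (h.trans (by simp [ι']) : ι' k n a = ι' k n 1))

section ops
variable (q : Fin n → k) (Λ : Fin n → Fin n → k)

/-- the λ-cocycle scalar -/
def cc (i : Fin n) (m : Fin n → ℤ) : KK k n :=
  ∏ j, if i < j then (ι' k n (Λ i j)) ^ (m j) else 1

/-- the `q`-scalar -/
def uu (q : Fin n → k) (i : Fin n) (t : ℤ) : KK k n :=
  (γK k n i * (ι' k n (q i)) ^ (1 - t) - 1) / (ι' k n (q i) - 1)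

def dd (i : Fin n) (m : Fin n → ℤ) : KK k n := uu q i (m i) * (cc Λ i m)⁻¹

lemma cc_ne_zero (hΛ : ∀ i j, Λ i j ≠ 0) (i : Fin n) (m : Fin n → ℤ) : cc Λ i m ≠ 0 := by
  rw [cc, Finset.prod_ne_zero_iff]
  intro j _
  by_cases h : i < j <;> simp [h, zpow_ne_zero _ (ι'_ne_zero (hΛ i j))]

lemma cc_zero (i : Fin n) : cc Λ i 0 = 1 := by
  rw [cc]
  apply Finset.prod_eq_one
  intro j _
  by_cases h : i < j <;> simp [h]

lemma cc_shift (hΛ : ∀ i j, Λ i j ≠ 0) (i l : Fin n) (t : ℤ) (m : Fin n → ℤ) :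
    cc Λ i (m + (Pi.single l t : Fin n → ℤ)) = cc Λ i m * (if i < l then (ι' k n (Λ i l)) ^ t else 1) := by
  have h1 : ∀ j ∈ Finset.univ, (if i < j then (ι' k n (Λ i j)) ^ ((m + (Pi.single l t : Fin n → ℤ)) j) else 1)
      = (if i < j then (ι' k n (Λ i j)) ^ (m j) else 1) *
        (if i < j then (ι' k n (Λ i j)) ^ (((Pi.single l t : Fin n → ℤ)) j) else 1) := by
    intro j _
    by_cases h : i < j
    · simp [h, Pi.add_apply, zpow_add₀ (ι'_ne_zero (hΛ i j))]
    · simp [h]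
  rw [cc, Finset.prod_congr rfl h1, Finset.prod_mul_distrib, ← cc]
  congr 1
  rw [Finset.prod_eq_single l]
  · simp
  · intro j _ hj
    simp [Pi.single_eq_of_ne hj]
  · simp


/-- basis vector -/
def ee (k : Type*) [Field k] {n : ℕ} (m : Fin n → ℤ) : VV k n := Finsupp.single m 1

/-- extend basis-assignment to linear operator -/
def op (f : (Fin n → ℤ) → VV k n) : VV k n →ₗ[KK k n] VV k n :=
  Finsupp.lsum (KK k n) fun m => LinearMap.toSpanSingleton _ _ (f m)

@[simp] lemma op_single (f : (Fin n → ℤ) → VV k n) (m : Fin n → ℤ) (c : KK k n) :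
    op f (Finsupp.single m c) = c • f m := by
  simp [op]

/-- the action of `x_i` -/
def Xop (i : Fin n) : VV k n →ₗ[KK k n] VV k n :=
  op fun m => cc Λ i m • ee k (m + (Pi.single i 1 : Fin n → ℤ))

/-- the action of `y_i` -/
def Yop (i : Fin n) : VV k n →ₗ[KK k n] VV k n :=
  op fun m => dd q Λ i m • ee k (m + (Pi.single i (-1) : Fin n → ℤ))

lemma relXX (hΛ : ∀ i j, Λ i j ≠ 0) {i j : Fin n} (hij : i < j) :
    Xop Λ i * Xop Λ j = Λ i j • (Xop Λ j * Xop Λ i) := by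
  apply Finsupp.lhom_ext
  intro m c
  have hidx : m + (Pi.single j 1 : Fin n → ℤ) + (Pi.single i 1 : Fin n → ℤ)
      = m + (Pi.single i 1 : Fin n → ℤ) + (Pi.single j 1 : Fin n → ℤ) := add_right_comm _ _ _
  simp only [Module.End.mul_apply, LinearMap.smul_apply, Xop, op_single, ee, Finsupp.smul_single,
    smul_eq_mul, smul_smul, mul_one]
  rw [hidx]
  congr 1
  rw [Algebra.smul_def, ι'_eq, cc_shift Λ hΛ, cc_shift Λ hΛ]
  have h1 : ¬ (j < i) := not_lt_of_gt hij
  simp only [hij, h1, if_true, if_false, zpow_one, mul_one]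
  ring


lemma dd_shift (hΛ : ∀ i j, Λ i j ≠ 0) {i l : Fin n} (hil : i ≠ l) (t : ℤ) (m : Fin n → ℤ) :
    dd q Λ i (m + (Pi.single l t : Fin n → ℤ))
      = dd q Λ i m * (if i < l then (ι' k n (Λ i l)) ^ (-t) else 1) := by
  rw [dd, dd, cc_shift Λ hΛ]
  have h0 : (m + (Pi.single l t : Fin n → ℤ)) i = m i := by
    simp [Pi.single_eq_of_ne hil]
  rw [h0]
  by_cases h : i < l
  · simp only [h, if_true, mul_inv, zpow_neg]
    ring
  · simp [h]

lemma dd_self (hΛ : ∀ i j, Λ i j ≠ 0) (i : Fin n) (t : ℤ) (m : Fin n → ℤ) :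
    dd q Λ i (m + (Pi.single i t : Fin n → ℤ)) = uu q i (m i + t) * (cc Λ i m)⁻¹ := by
  rw [dd, cc_shift Λ hΛ]
  simp [lt_irrefl]

lemma uu_rec (hq : q i ≠ 0) (hq1 : q i ≠ 1) (t : ℤ) :
    uu q i t = ι' k n (q i) * uu q i (t + 1) + 1 := by
  have hq' : ι' k n (q i) ≠ 0 := ι'_ne_zero hq
  have h1 : ι' k n (q i) - 1 ≠ 0 := sub_ne_zero.mpr (ι'_ne_one hq1)
  rw [uu, uu]
  have h2 : (1 : ℤ) - (t + 1) = -t := by ring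
  have h3 : (1 : ℤ) - t = 1 + (-t) := by ring
  rw [h2, h3, zpow_add₀ hq', zpow_one]
  field_simp
  ring

lemma idx_cancel (m : Fin n → ℤ) (i : Fin n) (t : ℤ) :
    m + (Pi.single i t : Fin n → ℤ) + (Pi.single i (-t) : Fin n → ℤ) = m := by
  funext x
  by_cases h : x = i <;> simp [Pi.single_apply, h]

lemma relYY (hΛ : ∀ i j, Λ i j ≠ 0) {i j : Fin n} (hij : i < j) :
    Yop q Λ i * Yop q Λ j = Λ i j • (Yop q Λ j * Yop q Λ i) := by
  apply Finsupp.lhom_ext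
  intro m c
  have hidx : m + (Pi.single j (-1) : Fin n → ℤ) + (Pi.single i (-1) : Fin n → ℤ)
      = m + (Pi.single i (-1) : Fin n → ℤ) + (Pi.single j (-1) : Fin n → ℤ) := add_right_comm _ _ _
  simp only [Module.End.mul_apply, LinearMap.smul_apply, Yop, op_single, ee, Finsupp.smul_single,
    smul_eq_mul, smul_smul, mul_one]
  rw [hidx]
  congr 1
  rw [Algebra.smul_def, ι'_eq, dd_shift q Λ hΛ (ne_of_lt hij), dd_shift q Λ hΛ (ne_of_gt hij)]
  have h1 : ¬ (j < i) := not_lt_of_gt hij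
  simp only [hij, h1, if_true, if_false, neg_neg, zpow_one, mul_one]
  ring

lemma relXY (hΛ : ∀ i j, Λ i j ≠ 0) {i j : Fin n} (hij : i < j) :
    Xop Λ i * Yop q Λ j = (Λ i j)⁻¹ • (Yop q Λ j * Xop Λ i) := by
  apply Finsupp.lhom_ext
  intro m c
  have hidx : m + (Pi.single j (-1) : Fin n → ℤ) + (Pi.single i 1 : Fin n → ℤ)
      = m + (Pi.single i 1 : Fin n → ℤ) + (Pi.single j (-1) : Fin n → ℤ) := add_right_comm _ _ _
  simp only [Module.End.mul_apply, LinearMap.smul_apply, Xop, Yop, op_single, ee,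
    Finsupp.smul_single, smul_eq_mul, smul_smul, mul_one]
  rw [hidx]
  congr 1
  rw [Algebra.smul_def, map_inv₀, ι'_eq, cc_shift Λ hΛ, dd_shift q Λ hΛ (ne_of_gt hij)]
  have h1 : ¬ (j < i) := not_lt_of_gt hij
  simp only [hij, h1, if_true, if_false, mul_one, zpow_neg, zpow_one]
  ring

lemma relYX (hΛ : ∀ i j, Λ i j ≠ 0) {i j : Fin n} (hij : i < j) :
    Yop q Λ i * Xop Λ j = (Λ i j)⁻¹ • (Xop Λ j * Yop q Λ i) := by
  apply Finsupp.lhom_ext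
  intro m c
  have hidx : m + (Pi.single j 1 : Fin n → ℤ) + (Pi.single i (-1) : Fin n → ℤ)
      = m + (Pi.single i (-1) : Fin n → ℤ) + (Pi.single j 1 : Fin n → ℤ) := add_right_comm _ _ _
  simp only [Module.End.mul_apply, LinearMap.smul_apply, Xop, Yop, op_single, ee,
    Finsupp.smul_single, smul_eq_mul, smul_smul, mul_one]
  rw [hidx]
  congr 1
  rw [Algebra.smul_def, map_inv₀, ι'_eq, dd_shift q Λ hΛ (ne_of_lt hij), cc_shift Λ hΛ]
  have h1 : ¬ (j < i) := not_lt_of_gt hij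
  simp only [hij, h1, if_true, if_false, mul_one, zpow_neg, zpow_one]
  ring

lemma relXYI (hq : ∀ i, q i ≠ 0) (hq1 : ∀ i, q i ≠ 1) (hΛ : ∀ i j, Λ i j ≠ 0) (i : Fin n) :
    Xop Λ i * Yop q Λ i = q i • (Yop q Λ i * Xop Λ i) + 1 := by
  apply Finsupp.lhom_ext
  intro m c
  have hidx1 : m + (Pi.single i (-1) : Fin n → ℤ) + (Pi.single i 1 : Fin n → ℤ) = m := by
    have := idx_cancel m i (-1); simpa using this
  have hidx2 : m + (Pi.single i 1 : Fin n → ℤ) + (Pi.single i (-1) : Fin n → ℤ) = m :=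
    idx_cancel m i 1
  simp only [Module.End.mul_apply, LinearMap.smul_apply, LinearMap.add_apply, Module.End.one_apply,
    Xop, Yop, op_single, ee, Finsupp.smul_single, smul_eq_mul, smul_smul, mul_one]
  rw [hidx1, hidx2, ← Finsupp.single_add]
  congr 1
  rw [Algebra.smul_def, ι'_eq]
  have e1 : cc Λ i (m + (Pi.single i (-1) : Fin n → ℤ)) = cc Λ i m := by
    rw [cc_shift Λ hΛ]; simp [lt_irrefl]
  have e2 : dd q Λ i (m + (Pi.single i 1 : Fin n → ℤ)) = uu q i (m i + 1) * (cc Λ i m)⁻¹ :=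
    dd_self q Λ hΛ i 1 m
  rw [e1, e2, dd, uu_rec q (hq i) (hq1 i)]
  have hcc : cc Λ i m ≠ 0 := cc_ne_zero Λ hΛ i m
  field_simp


variable (k n) in
/-- the representation -/
def rep (q : Fin n → k) (Λ : Fin n → Fin n → k) (hq : ∀ i, q i ≠ 0) (hq1 : ∀ i, q i ≠ 1)
    (hΛ : ∀ i j, Λ i j ≠ 0) :
    AJWeyl k n q Λ →ₐ[k] Module.End (KK k n) (VV k n) :=
  RingQuot.liftAlgHom k ⟨FreeAlgebra.lift k (Sum.elim (Xop Λ) (Yop q Λ)), by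
    intro a b r
    induction r with
    | @xx i j h =>
        simp only [map_mul, map_smul, FreeAlgebra.lift_ι_apply, fX, Sum.elim_inl]
        exact relXX Λ hΛ h
    | @yy i j h =>
        simp only [map_mul, map_smul, FreeAlgebra.lift_ι_apply, fY, Sum.elim_inr]
        exact relYY q Λ hΛ h
    | @xy i j h =>
        simp only [map_mul, map_smul, FreeAlgebra.lift_ι_apply, fX, fY, Sum.elim_inl, Sum.elim_inr]
        exact relXY q Λ hΛ h
    | @yx i j h =>
        simp only [map_mul, map_smul, FreeAlgebra.lift_ι_apply, fX, fY, Sum.elim_inl, Sum.elim_inr]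
        exact relYX q Λ hΛ h
    | xyi i =>
        simp only [map_mul, map_smul, map_add, map_one, FreeAlgebra.lift_ι_apply, fX, fY,
          Sum.elim_inl, Sum.elim_inr]
        exact relXYI q Λ hq hq1 hΛ i⟩

variable (q : Fin n → k) (Λ : Fin n → Fin n → k) (hq : ∀ i, q i ≠ 0) (hq1 : ∀ i, q i ≠ 1)
    (hΛ : ∀ i j, Λ i j ≠ 0)

lemma rep_X (i : Fin n) : rep k n q Λ hq hq1 hΛ (ajX k n q Λ i) = Xop Λ i := by
  rw [ajX, rep, RingQuot.liftAlgHom_mkAlgHom_apply]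
  simp [fX, FreeAlgebra.lift_ι_apply]

lemma rep_Y (i : Fin n) : rep k n q Λ hq hq1 hΛ (ajY k n q Λ i) = Yop q Λ i := by
  rw [ajY, rep, RingQuot.liftAlgHom_mkAlgHom_apply]
  simp [fY, FreeAlgebra.lift_ι_apply]

lemma uu_diff (i : Fin n) (hqi : q i ≠ 0) (hq1i : q i ≠ 1) :
    uu q i 0 - uu q i 1 = γK k n i := by
  have h1 : ι' k n (q i) - 1 ≠ 0 := sub_ne_zero.mpr (ι'_ne_one hq1i)
  rw [uu, uu]
  norm_num
  field_simp
  ring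

lemma rep_Z (i : Fin n) : rep k n q Λ hq hq1 hΛ (ajZ k n q Λ i) (ee k 0)
    = γK k n i • ee k 0 := by
  have hidx1 : (0 : Fin n → ℤ) + (Pi.single i (-1) : Fin n → ℤ) + (Pi.single i 1 : Fin n → ℤ)
      = 0 := by simpa using idx_cancel 0 i (-1)
  have hidx2 : (0 : Fin n → ℤ) + (Pi.single i 1 : Fin n → ℤ) + (Pi.single i (-1) : Fin n → ℤ)
      = 0 := idx_cancel 0 i 1
  have e1 : cc Λ i ((0 : Fin n → ℤ) + (Pi.single i (-1) : Fin n → ℤ)) = 1 := by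
    rw [cc_shift Λ hΛ]; simp [lt_irrefl, cc_zero]
  have e2 : dd q Λ i ((0 : Fin n → ℤ) + (Pi.single i 1 : Fin n → ℤ)) = uu q i 1 := by
    rw [dd_self q Λ hΛ]; simp [cc_zero]
  have e3 : dd q Λ i 0 = uu q i 0 := by
    rw [dd]; simp [cc_zero]
  rw [ajZ, map_sub, map_mul, map_mul, rep_X, rep_Y]
  simp only [LinearMap.sub_apply, Module.End.mul_apply, Xop, Yop, ee, op_single, smul_smul,
    Finsupp.smul_single, smul_eq_mul, mul_one]
  rw [hidx1, hidx2, e1, e2, e3, cc_zero, ← Finsupp.single_sub]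
  rw [show (1 : KK k n) * uu q i 0 * 1 - 1 * 1 * uu q i 1 = uu q i 0 - uu q i 1 by ring]
  rw [uu_diff q i (hq i) (hq1 i)]


section ajrels

lemma ajrel_xx {i j : Fin n} (hij : i < j) :
    ajX k n q Λ i * ajX k n q Λ j = Λ i j • (ajX k n q Λ j * ajX k n q Λ i) := by
  rw [ajX, ajX, ← map_mul, RingQuot.mkAlgHom_rel k (AJRel.xx hij), map_smul, map_mul]

lemma ajrel_yy {i j : Fin n} (hij : i < j) :
    ajY k n q Λ i * ajY k n q Λ j = Λ i j • (ajY k n q Λ j * ajY k n q Λ i) := by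
  rw [ajY, ajY, ← map_mul, RingQuot.mkAlgHom_rel k (AJRel.yy hij), map_smul, map_mul]

lemma ajrel_xy {i j : Fin n} (hij : i < j) :
    ajX k n q Λ i * ajY k n q Λ j = (Λ i j)⁻¹ • (ajY k n q Λ j * ajX k n q Λ i) := by
  rw [ajX, ajY, ← map_mul, RingQuot.mkAlgHom_rel k (AJRel.xy hij), map_smul, map_mul]

lemma ajrel_yx {i j : Fin n} (hij : i < j) :
    ajY k n q Λ i * ajX k n q Λ j = (Λ i j)⁻¹ • (ajX k n q Λ j * ajY k n q Λ i) := by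
  rw [ajX, ajY, ← map_mul, RingQuot.mkAlgHom_rel k (AJRel.yx hij), map_smul, map_mul]

lemma ajrel_xyi (i : Fin n) :
    ajX k n q Λ i * ajY k n q Λ i = q i • (ajY k n q Λ i * ajX k n q Λ i) + 1 := by
  rw [ajX, ajY, ← map_mul, RingQuot.mkAlgHom_rel k (AJRel.xyi i), map_add, map_smul, map_mul,
    map_one]

lemma w_comm (hΛ : ∀ i j, Λ i j ≠ 0) {i j : Fin n} (hij : i < j) :
    (ajY k n q Λ i * ajX k n q Λ i) * (ajY k n q Λ j * ajX k n q Λ j)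
      = (ajY k n q Λ j * ajX k n q Λ j) * (ajY k n q Λ i * ajX k n q Λ i) := by
  set X := ajX k n q Λ with hX
  set Y := ajY k n q Λ with hY
  have h1 : Y i * X i * (Y j * X j) = Y j * Y i * (X i * X j) := by
    rw [show Y i * X i * (Y j * X j) = Y i * (X i * Y j) * X j by noncomm_ring,
        ajrel_xy q Λ hij, mul_smul_comm, smul_mul_assoc,
        show Y i * (Y j * X i) * X j = (Y i * Y j) * (X i * X j) by noncomm_ring,
        ajrel_yy q Λ hij, smul_mul_assoc, smul_smul, inv_mul_cancel₀ (hΛ i j), one_smul]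
  have hXY : X j * Y i = Λ i j • (Y i * X j) := by
    rw [ajrel_yx q Λ hij, smul_smul, mul_inv_cancel₀ (hΛ i j), one_smul]
  have hXX : X j * X i = (Λ i j)⁻¹ • (X i * X j) := by
    rw [ajrel_xx q Λ hij, smul_smul, inv_mul_cancel₀ (hΛ i j), one_smul]
  have h2 : Y j * X j * (Y i * X i) = Y j * Y i * (X i * X j) := by
    rw [show Y j * X j * (Y i * X i) = Y j * (X j * Y i) * X i by noncomm_ring, hXY,
        mul_smul_comm, smul_mul_assoc,
        show Y j * (Y i * X j) * X i = (Y j * Y i) * (X j * X i) by noncomm_ring, hXX,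
        mul_smul_comm, smul_smul, mul_inv_cancel₀ (hΛ i j), one_smul]
  rw [h1, h2]

lemma z_eq (i : Fin n) :
    ajZ k n q Λ i = (q i - 1) • (ajY k n q Λ i * ajX k n q Λ i) + 1 := by
  rw [ajZ, ajrel_xyi q Λ i]
  simp only [Algebra.smul_def, map_sub, map_one, sub_mul, one_mul]
  abel

lemma z_comm (hΛ : ∀ i j, Λ i j ≠ 0) (i j : Fin n) :
    ajZ k n q Λ i * ajZ k n q Λ j = ajZ k n q Λ j * ajZ k n q Λ i := by
  have key : ∀ i j : Fin n, i < j →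
      ajZ k n q Λ i * ajZ k n q Λ j = ajZ k n q Λ j * ajZ k n q Λ i := by
    intro i j hij
    rw [z_eq, z_eq]
    simp only [add_mul, mul_add, one_mul, mul_one, smul_mul_assoc, mul_smul_comm, smul_add,
      smul_smul]
    rw [w_comm q Λ hΛ hij, mul_comm (q i - 1) (q j - 1)]
    abel
  rcases lt_trichotomy i j with h | h | h
  · exact key i j h
  · rw [h]
  · exact (key j i h).symm

end ajrels

end ops
end AJP

/-- Proposition 2.2.7 (first part): if no `q_i` equals `1`, the elements `z₁, …, zₙ` of
`𝒜ₙ^{q,Λ}` are algebraically independent over `k`: the `k`-algebra homomorphism from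
`MvPolynomial (Fin n) k` sending the `i`-th variable to `z_i` is injective. -/
theorem ajZ_algebraically_independent {k : Type*} [Field k] {n : ℕ} (hn : 0 < n)
    (q : Fin n → k) (Λ : Fin n → Fin n → k)
    (hq : ∀ i, q i ≠ 0) (hq1 : ∀ i, q i ≠ 1) (hΛ : ∀ i j, Λ i j ≠ 0) (hΛd : ∀ i, Λ i i = 1)
    (hΛs : ∀ i j, Λ i j * Λ j i = 1) :
    ∃ F : MvPolynomial (Fin n) k →ₐ[k] AJWeyl k n q Λ,
      (∀ i : Fin n, F (MvPolynomial.X i) = ajZ k n q Λ i) ∧ Function.Injective F := by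
  classical
  have hz := AJP.z_comm q Λ hΛ
  have hcomm : ∀ a ∈ Set.range (ajZ k n q Λ), ∀ b ∈ Set.range (ajZ k n q Λ), a * b = b * a := by
    rintro a ⟨i, rfl⟩ b ⟨j, rfl⟩
    exact hz i j
  set S := Algebra.adjoin k (Set.range (ajZ k n q Λ)) with hS
  letI cS : CommRing ↥S := Algebra.adjoinCommRingOfComm k hcomm
  have hg : ∀ i, ajZ k n q Λ i ∈ S := fun i => Algebra.subset_adjoin ⟨i, rfl⟩
  let g : Fin n → S := fun i => ⟨ajZ k n q Λ i, hg i⟩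
  let G := @MvPolynomial.aeval k ↥S (Fin n) _ cS.toCommSemiring S.algebra g
  let F : MvPolynomial (Fin n) k →ₐ[k] AJWeyl k n q Λ :=
  { toFun := fun p => ((G p : S) : AJWeyl k n q Λ),
    map_one' := by show ((G 1 : S) : AJWeyl k n q Λ) = 1; rw [map_one]; rfl,
    map_mul' := fun a b => by
      show ((G (a * b) : S) : AJWeyl k n q Λ) = ((G a : S) : AJWeyl k n q Λ) * ((G b : S) : AJWeyl k n q Λ)
      rw [map_mul]; rfl,
    map_zero' := by show ((G 0 : S) : AJWeyl k n q Λ) = 0; rw [map_zero]; rfl,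
    map_add' := fun a b => by
      show ((G (a + b) : S) : AJWeyl k n q Λ) = ((G a : S) : AJWeyl k n q Λ) + ((G b : S) : AJWeyl k n q Λ)
      rw [map_add]; rfl,
    commutes' := fun r => by
      show ((G (algebraMap k _ r) : S) : AJWeyl k n q Λ) = algebraMap k (AJWeyl k n q Λ) r
      rw [AlgHom.commutes]; rfl }
  have hFX : ∀ i, F (MvPolynomial.X i) = ajZ k n q Λ i := by
    intro i
    show ((G (MvPolynomial.X i) : S) : AJWeyl k n q Λ) = _
    rw [show G (MvPolynomial.X i) = g i from
      @MvPolynomial.aeval_X k ↥S (Fin n) _ cS.toCommSemiring S.algebra g i]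
  refine ⟨F, hFX, ?_⟩
  rw [injective_iff_map_eq_zero]
  intro p hp
  have key : ∀ p : MvPolynomial (Fin n) k,
      AJP.rep k n q Λ hq hq1 hΛ (F p) (AJP.ee k 0)
        = (algebraMap (MvPolynomial (Fin n) k) (AJP.KK k n) p) • AJP.ee k 0 := by
    intro p
    induction p using MvPolynomial.induction_on with
    | C a =>
        have h1 : F (MvPolynomial.C a) = algebraMap k _ a := by
          rw [show (MvPolynomial.C a : MvPolynomial (Fin n) k) = algebraMap k _ a from rfl]
          exact F.commutes a
        have h2 : algebraMap (MvPolynomial (Fin n) k) (AJP.KK k n) (MvPolynomial.C a)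
            = algebraMap k (AJP.KK k n) a := by
          rw [show (MvPolynomial.C a : MvPolynomial (Fin n) k) = algebraMap k _ a from rfl,
            ← IsScalarTower.algebraMap_apply]
        rw [h1, AlgHom.commutes, h2, Algebra.algebraMap_eq_smul_one, LinearMap.smul_apply,
          Module.End.one_apply, algebraMap_smul]
    | add p1 p2 h1 h2 =>
        rw [map_add, map_add, LinearMap.add_apply, h1, h2, map_add, add_smul]
    | mul_X p1 i h1 =>
        rw [map_mul, map_mul, hFX i, Module.End.mul_apply, AJP.rep_Z q Λ hq hq1 hΛ i, map_smul,
          h1, smul_smul, map_mul,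
          show AJP.γK k n i = algebraMap _ (AJP.KK k n) (MvPolynomial.X i) from rfl,
          mul_comm (algebraMap (MvPolynomial (Fin n) k) (AJP.KK k n) (MvPolynomial.X i))
            (algebraMap (MvPolynomial (Fin n) k) (AJP.KK k n) p1)]
  have h0 := key p
  rw [hp, map_zero] at h0
  have h0' : (0 : AJP.VV k n) = algebraMap _ (AJP.KK k n) p • AJP.ee k 0 := by
    simpa using h0
  have hee : (AJP.ee k (0 : Fin n → ℤ)) ≠ 0 := by
    simp [AJP.ee, Finsupp.single_eq_zero]
  have hz0 : algebraMap (MvPolynomial (Fin n) k) (AJP.KK k n) p = 0 := by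
    rcases smul_eq_zero.mp h0'.symm with h | h
    · exact h
    · exact absurd h hee
  exact IsFractionRing.injective (MvPolynomial (Fin n) k) (AJP.KK k n)
    (by rw [hz0, map_zero])
end
end

section
/- In the Maltsiniotis quantized Weyl algebra Aₙ^{q,Λ}, the elements z_i = x_i y_i − y_i x_i satisfy: z_i x_j = x_j z_i and z_i y_j = y_j z_i whenever i < j; q_j · (z_i x_j) = x_j z_i (equivalently z_i x_j = q_j^{-1} x_j z_i) and z_i y_j = q_j · (y_j z_i) whenever j ≤ i; and z_i z_j = z_j z_i for all i, j. In particular each z_i is a normal element of Aₙ^{q,Λ}. -/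
/-- The defining relations of the Maltsiniotis quantized Weyl algebra. -/
inductive MRel (k : Type*) [Field k] (n : ℕ) (q : Fin n → k) (Λ : Fin n → Fin n → k) :
    FreeAlgebra k (Fin n ⊕ Fin n) → FreeAlgebra k (Fin n ⊕ Fin n) → Prop
  | xx {i j : Fin n} : i < j →
      MRel k n q Λ (fX k n i * fX k n j) ((Λ i j * q i) • (fX k n j * fX k n i))
  | yy {i j : Fin n} : i < j →
      MRel k n q Λ (fY k n i * fY k n j) (Λ i j • (fY k n j * fY k n i))
  | xy {i j : Fin n} : i < j →
      MRel k n q Λ (fX k n i * fY k n j) ((Λ i j)⁻¹ • (fY k n j * fX k n i))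
  | yx {i j : Fin n} : i < j →
      MRel k n q Λ (fY k n i * fX k n j) (((Λ i j)⁻¹ * (q i)⁻¹) • (fX k n j * fY k n i))
  | xyi (i : Fin n) :
      MRel k n q Λ (fX k n i * fY k n i)
        (q i • (fY k n i * fX k n i) + (1 +
          ∑ j ∈ Finset.univ.filter (fun j => j < i), (q j - 1) • (fY k n j * fX k n j)))

/-- The Maltsiniotis quantized Weyl algebra `Aₙ^{q,Λ}`. -/
abbrev MWeyl (k : Type*) [Field k] (n : ℕ) (q : Fin n → k) (Λ : Fin n → Fin n → k) :=
  RingQuot (MRel k n q Λ)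

/-- The generator `x_i` of `Aₙ^{q,Λ}`. -/
def mX (k : Type*) [Field k] (n : ℕ) (q : Fin n → k) (Λ : Fin n → Fin n → k) (i : Fin n) :
    MWeyl k n q Λ :=
  RingQuot.mkAlgHom k (MRel k n q Λ) (fX k n i)

/-- The generator `y_i` of `Aₙ^{q,Λ}`. -/
def mY (k : Type*) [Field k] (n : ℕ) (q : Fin n → k) (Λ : Fin n → Fin n → k) (i : Fin n) :
    MWeyl k n q Λ :=
  RingQuot.mkAlgHom k (MRel k n q Λ) (fY k n i)

/-- The element `z_i = x_i y_i - y_i x_i` of `Aₙ^{q,Λ}`. -/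
def mZ (k : Type*) [Field k] (n : ℕ) (q : Fin n → k) (Λ : Fin n → Fin n → k) (i : Fin n) :
    MWeyl k n q Λ :=
  mX k n q Λ i * mY k n q Λ i - mY k n q Λ i * mX k n q Λ i

section MZaux

variable {k : Type*} [Field k] {n : ℕ} (q : Fin n → k) (Λ : Fin n → Fin n → k)

local notation "X" => mX k n q Λ
local notation "Y" => mY k n q Λ

/-- `w_i = y_i x_i`. -/
noncomputable def mW (i : Fin n) : MWeyl k n q Λ := mY k n q Λ i * mX k n q Λ i

/-- `c_i = 1 + ∑_{j<i} (q_j - 1) w_j`. -/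
noncomputable def mC (i : Fin n) : MWeyl k n q Λ :=
  1 + ∑ j ∈ Finset.Iio i, (q j - 1) • mW q Λ j

local notation "W" => mW q Λ
local notation "C" => mC q Λ

lemma rxx {i j : Fin n} (h : i < j) :
    X i * X j = (Λ i j * q i) • (X j * X i) := by
  have := RingQuot.mkAlgHom_rel k (MRel.xx (q := q) (Λ := Λ) h)
  simpa [mX, map_mul, map_smul] using this

lemma ryy {i j : Fin n} (h : i < j) :
    Y i * Y j = Λ i j • (Y j * Y i) := by
  have := RingQuot.mkAlgHom_rel k (MRel.yy (q := q) (Λ := Λ) h)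
  simpa [mY, map_mul, map_smul] using this

lemma rxy {i j : Fin n} (h : i < j) :
    X i * Y j = (Λ i j)⁻¹ • (Y j * X i) := by
  have := RingQuot.mkAlgHom_rel k (MRel.xy (q := q) (Λ := Λ) h)
  simpa [mX, mY, map_mul, map_smul] using this

lemma ryx {i j : Fin n} (h : i < j) :
    Y i * X j = ((Λ i j)⁻¹ * (q i)⁻¹) • (X j * Y i) := by
  have := RingQuot.mkAlgHom_rel k (MRel.yx (q := q) (Λ := Λ) h)
  simpa [mX, mY, map_mul, map_smul] using this

lemma rxyi (i : Fin n) : X i * Y i = q i • W i + C i := by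
  have h := RingQuot.mkAlgHom_rel k (MRel.xyi (q := q) (Λ := Λ) i)
  have e : (Finset.univ.filter (fun j => j < i)) = Finset.Iio i := by
    ext j; simp
  simp only [map_mul, map_add, map_smul, map_sum, map_one, e] at h
  simpa [mX, mY, mC, mW, map_mul, map_add, map_smul, map_sum, map_one, e] using h

variable (hq : ∀ i, q i ≠ 0) (hΛ : ∀ i j, Λ i j ≠ 0)

include hq hΛ

/-- `w_j` commutes with `x_m` for `j < m`. -/
lemma Wcx {j m : Fin n} (h : j < m) : W j * X m = X m * W j := by
  calc W j * X m = Y j * (X j * X m) := by rw [mW, mul_assoc]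
    _ = (Λ j m * q j) • (Y j * X m * X j) := by
        rw [rxx q Λ h, mul_smul_comm, mul_assoc]
    _ = ((Λ j m * q j) * ((Λ j m)⁻¹ * (q j)⁻¹)) • (X m * Y j * X j) := by
        rw [ryx q Λ h, smul_mul_assoc, smul_smul]
    _ = X m * W j := by
        rw [show (Λ j m * q j) * ((Λ j m)⁻¹ * (q j)⁻¹) = 1 by
          field_simp [hΛ j m, hq j], one_smul, mW, mul_assoc]

/-- `w_j` commutes with `y_m` for `j < m`. -/
lemma Wcy {j m : Fin n} (h : j < m) : W j * Y m = Y m * W j := by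
  calc W j * Y m = Y j * (X j * Y m) := by rw [mW, mul_assoc]
    _ = (Λ j m)⁻¹ • (Y j * Y m * X j) := by
        rw [rxy q Λ h, mul_smul_comm, mul_assoc]
    _ = ((Λ j m)⁻¹ * Λ j m) • (Y m * Y j * X j) := by
        rw [ryy q Λ h, smul_mul_assoc, smul_smul]
    _ = Y m * W j := by
        rw [inv_mul_cancel₀ (hΛ j m), one_smul, mW, mul_assoc]

/-- `q_m w_j x_m = x_m w_j` for `m < j`. -/
lemma Wx {m j : Fin n} (h : m < j) : q m • (W j * X m) = X m * W j := by
  have hxx : X j * X m = ((Λ m j)⁻¹ * (q m)⁻¹) • (X m * X j) := by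
    rw [rxx q Λ h, smul_smul, show (Λ m j)⁻¹ * (q m)⁻¹ * (Λ m j * q m) = 1 by
      field_simp [hΛ m j, hq m], one_smul]
  have hyx : Y j * X m = Λ m j • (X m * Y j) := by
    rw [rxy q Λ h, smul_smul, mul_inv_cancel₀ (hΛ m j), one_smul]
  calc q m • (W j * X m) = q m • (Y j * (X j * X m)) := by rw [mW, mul_assoc]
    _ = (q m * ((Λ m j)⁻¹ * (q m)⁻¹)) • (Y j * X m * X j) := by
        rw [hxx, mul_smul_comm, smul_smul, mul_assoc]
    _ = (q m * ((Λ m j)⁻¹ * (q m)⁻¹) * Λ m j) • (X m * Y j * X j) := by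
        rw [hyx, smul_mul_assoc, smul_smul]
    _ = X m * W j := by
        rw [show q m * ((Λ m j)⁻¹ * (q m)⁻¹) * Λ m j = 1 by
          field_simp [hΛ m j, hq m]; try ring, one_smul, mW, mul_assoc]

/-- `w_j y_m = q_m y_m w_j` for `m < j`. -/
lemma Wy {m j : Fin n} (h : m < j) : W j * Y m = q m • (Y m * W j) := by
  have hxy : X j * Y m = (Λ m j * q m) • (Y m * X j) := by
    rw [ryx q Λ h, smul_smul, show Λ m j * q m * ((Λ m j)⁻¹ * (q m)⁻¹) = 1 by
      field_simp [hΛ m j, hq m], one_smul]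
  have hyy : Y j * Y m = (Λ m j)⁻¹ • (Y m * Y j) := by
    rw [ryy q Λ h, smul_smul, inv_mul_cancel₀ (hΛ m j), one_smul]
  calc W j * Y m = Y j * (X j * Y m) := by rw [mW, mul_assoc]
    _ = (Λ m j * q m) • (Y j * Y m * X j) := by
        rw [hxy, mul_smul_comm, mul_assoc]
    _ = ((Λ m j * q m) * (Λ m j)⁻¹) • (Y m * Y j * X j) := by
        rw [hyy, smul_mul_assoc, smul_smul]
    _ = q m • (Y m * W j) := by
        rw [show (Λ m j * q m) * (Λ m j)⁻¹ = q m by field_simp [hΛ m j]; try ring, mW, mul_assoc]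

/-- `c_m` commutes with `x_m`. -/
lemma Cx (m : Fin n) : C m * X m = X m * C m := by
  rw [mC, add_mul, mul_add, one_mul, mul_one, Finset.sum_mul, Finset.mul_sum]
  congr 1
  refine Finset.sum_congr rfl fun j hj => ?_
  rw [smul_mul_assoc, mul_smul_comm, Wcx q Λ hq hΛ (Finset.mem_Iio.mp hj)]

/-- `c_m` commutes with `y_m`. -/
lemma Cy (m : Fin n) : C m * Y m = Y m * C m := by
  rw [mC, add_mul, mul_add, one_mul, mul_one, Finset.sum_mul, Finset.mul_sum]
  congr 1
  refine Finset.sum_congr rfl fun j hj => ?_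
  rw [smul_mul_assoc, mul_smul_comm, Wcy q Λ hq hΛ (Finset.mem_Iio.mp hj)]

omit hq hΛ

/-- `z_i = c_i + (q_i - 1) w_i`. -/
lemma Zeq (i : Fin n) : mZ k n q Λ i = C i + (q i - 1) • W i := by
  rw [mZ, show mY k n q Λ i * mX k n q Λ i = W i from rfl, rxyi]
  module

/-- `z_i = 1 + ∑_{j ≤ i} (q_j - 1) w_j`. -/
lemma Zfull (i : Fin n) :
    mZ k n q Λ i = 1 + ∑ j ∈ Finset.Iic i, (q j - 1) • W j := by
  rw [Zeq, mC, ← Finset.Iio_insert i, Finset.sum_insert (by simp)]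
  abel

lemma Zsplit {m i : Fin n} (h : m ≤ i) :
    mZ k n q Λ i
      = C m + (q m - 1) • W m + ∑ j ∈ Finset.Ioc m i, (q j - 1) • W j := by
  have hu : Finset.Iic i = Finset.Iic m ∪ Finset.Ioc m i := by
    ext j
    simp only [Finset.mem_Iic, Finset.mem_union, Finset.mem_Ioc]
    omega
  have hd : Disjoint (Finset.Iic m) (Finset.Ioc m i) := by
    rw [Finset.disjoint_left]
    intro j hj hj'
    simp only [Finset.mem_Iic] at hj
    simp only [Finset.mem_Ioc] at hj'
    omega
  rw [Zfull, hu, Finset.sum_union hd, ← Finset.Iio_insert m,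
    Finset.sum_insert (by simp), mC]
  abel

include hq hΛ

lemma zx_lt {i m : Fin n} (h : i < m) :
    mZ k n q Λ i * X m = X m * mZ k n q Λ i := by
  rw [Zfull, add_mul, mul_add, one_mul, mul_one, Finset.sum_mul, Finset.mul_sum]
  congr 1
  refine Finset.sum_congr rfl fun j hj => ?_
  rw [smul_mul_assoc, mul_smul_comm,
    Wcx q Λ hq hΛ (lt_of_le_of_lt (Finset.mem_Iic.mp hj) h)]

lemma zy_lt {i m : Fin n} (h : i < m) :
    mZ k n q Λ i * Y m = Y m * mZ k n q Λ i := by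
  rw [Zfull, add_mul, mul_add, one_mul, mul_one, Finset.sum_mul, Finset.mul_sum]
  congr 1
  refine Finset.sum_congr rfl fun j hj => ?_
  rw [smul_mul_assoc, mul_smul_comm,
    Wcy q Λ hq hΛ (lt_of_le_of_lt (Finset.mem_Iic.mp hj) h)]

lemma zx_le {m i : Fin n} (h : m ≤ i) :
    q m • (mZ k n q Λ i * X m) = X m * mZ k n q Λ i := by
  set S := ∑ j ∈ Finset.Ioc m i, (q j - 1) • W j with hSdef
  have hA : X m * C m = C m * X m := (Cx q Λ hq hΛ m).symm
  have hB : X m * W m = q m • (W m * X m) + C m * X m := by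
    calc X m * W m = (X m * Y m) * X m := by rw [mW, ← mul_assoc]
      _ = q m • (W m * X m) + C m * X m := by
          rw [rxyi, add_mul, smul_mul_assoc]
  have hS : X m * S = q m • (S * X m) := by
    rw [hSdef, Finset.sum_mul, Finset.mul_sum, Finset.smul_sum]
    refine Finset.sum_congr rfl fun j hj => ?_
    rw [smul_mul_assoc, mul_smul_comm, smul_comm (q m),
      Wx q Λ hq hΛ (Finset.mem_Ioc.mp hj).1]
  rw [Zsplit q Λ h, ← hSdef]
  simp only [mul_add, add_mul, mul_smul_comm, smul_mul_assoc, hA, hB, hS]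
  module

lemma zy_le {m i : Fin n} (h : m ≤ i) :
    mZ k n q Λ i * Y m = q m • (Y m * mZ k n q Λ i) := by
  set S := ∑ j ∈ Finset.Ioc m i, (q j - 1) • W j with hSdef
  have hA : C m * Y m = Y m * C m := Cy q Λ hq hΛ m
  have hB : W m * Y m = q m • (Y m * W m) + Y m * C m := by
    calc W m * Y m = Y m * (X m * Y m) := by rw [mW, mul_assoc]
      _ = q m • (Y m * W m) + Y m * C m := by
          rw [rxyi, mul_add, mul_smul_comm]
  have hS : S * Y m = q m • (Y m * S) := by
    rw [hSdef, Finset.sum_mul, Finset.mul_sum, Finset.smul_sum]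
    refine Finset.sum_congr rfl fun j hj => ?_
    rw [smul_mul_assoc, mul_smul_comm, smul_comm (q m),
      Wy q Λ hq hΛ (Finset.mem_Ioc.mp hj).1]
  rw [Zsplit q Λ h, ← hSdef]
  simp only [mul_add, add_mul, mul_smul_comm, smul_mul_assoc, hA, hB, hS]
  module

/-- `z_i` commutes with every `w_l`. -/
lemma zW (i l : Fin n) : mZ k n q Λ i * W l = W l * mZ k n q Λ i := by
  rcases le_or_gt l i with hle | hlt
  · have hx : mZ k n q Λ i * X l = (q l)⁻¹ • (X l * mZ k n q Λ i) := by
      rw [← zx_le q Λ hq hΛ hle, smul_smul, inv_mul_cancel₀ (hq l), one_smul]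
    calc mZ k n q Λ i * W l = (mZ k n q Λ i * Y l) * X l := by rw [mW, mul_assoc]
      _ = q l • (Y l * (mZ k n q Λ i * X l)) := by
          rw [zy_le q Λ hq hΛ hle, smul_mul_assoc, mul_assoc]
      _ = (q l * (q l)⁻¹) • (Y l * (X l * mZ k n q Λ i)) := by
          rw [hx, mul_smul_comm, smul_smul]
      _ = W l * mZ k n q Λ i := by
          rw [mul_inv_cancel₀ (hq l), one_smul, mW, mul_assoc]
  · calc mZ k n q Λ i * W l = (mZ k n q Λ i * Y l) * X l := by rw [mW, mul_assoc]
      _ = Y l * (mZ k n q Λ i * X l) := by rw [zy_lt q Λ hq hΛ hlt, mul_assoc]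
      _ = W l * mZ k n q Λ i := by rw [zx_lt q Λ hq hΛ hlt, mW, mul_assoc]

lemma zz (i j : Fin n) :
    mZ k n q Λ i * mZ k n q Λ j = mZ k n q Λ j * mZ k n q Λ i := by
  rw [Zfull q Λ j, mul_add, add_mul, mul_one, one_mul, Finset.mul_sum, Finset.sum_mul]
  congr 1
  refine Finset.sum_congr rfl fun l _ => ?_
  rw [mul_smul_comm, smul_mul_assoc, zW q Λ hq hΛ i l]

end MZaux

/-- Proposition 2.1.4: the elements `z_i` of the Maltsiniotis quantized Weyl algebra are
normal; explicitly `z_i x_j = x_j z_i` and `z_i y_j = y_j z_i` for `i < j`,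
`z_i x_j = q_j⁻¹ x_j z_i` (i.e. `q_j • (z_i x_j) = x_j z_i`) and `z_i y_j = q_j • (y_j z_i)`
for `j ≤ i`, and the `z_i` pairwise commute. -/
theorem mZ_relations {k : Type*} [Field k] {n : ℕ} (q : Fin n → k) (Λ : Fin n → Fin n → k)
    (hq : ∀ i, q i ≠ 0) (hΛ : ∀ i j, Λ i j ≠ 0) (hΛd : ∀ i, Λ i i = 1)
    (hΛs : ∀ i j, Λ i j * Λ j i = 1) :
    (∀ i j : Fin n, i < j →
        mZ k n q Λ i * mX k n q Λ j = mX k n q Λ j * mZ k n q Λ i ∧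
        mZ k n q Λ i * mY k n q Λ j = mY k n q Λ j * mZ k n q Λ i) ∧
    (∀ i j : Fin n, j ≤ i →
        q j • (mZ k n q Λ i * mX k n q Λ j) = mX k n q Λ j * mZ k n q Λ i ∧
        mZ k n q Λ i * mY k n q Λ j = q j • (mY k n q Λ j * mZ k n q Λ i)) ∧
    (∀ i j : Fin n, mZ k n q Λ i * mZ k n q Λ j = mZ k n q Λ j * mZ k n q Λ i) := by
  refine ⟨fun i j h => ⟨zx_lt q Λ hq hΛ h, zy_lt q Λ hq hΛ h⟩,
    fun i j h => ⟨zx_le q Λ hq hΛ h, zy_le q Λ hq hΛ h⟩,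
    fun i j => zz q Λ hq hΛ i j⟩
end

section
/- Assume q_i ≠ 1 for all i. For k⃗ = (k₁, …, kₙ) ∈ ℤⁿ define b_{k⃗} = b_{k⃗,1} b_{k⃗,2} ⋯ b_{k⃗,n} ∈ 𝒜ₙ^{q,Λ}, where b_{k⃗,i} = x_i^{k_i} if k_i ≥ 0 and b_{k⃗,i} = y_i^{−k_i} if k_i ≤ 0. Then for every i and every k⃗ ∈ ℤⁿ: x_i b_{k⃗} = (∏_{j<i} λ_{ij}^{k_j}) b_{k⃗+e_i} if k_i ≥ 0, and x_i b_{k⃗} = (∏_{j<i} λ_{ij}^{k_j}) · b_{k⃗+e_i} · (q_i − 1)^{-1}(q_i^{−k_i} z_i − 1) if k_i < 0; while y_i b_{k⃗} = (∏_{j<i} λ_{ij}^{k_j})^{-1} · b_{k⃗−e_i} · (q_i − 1)^{-1}(q_i^{−k_i+1} z_i − 1) if k_i > 0, and y_i b_{k⃗} = (∏_{j<i} λ_{ij}^{k_j})^{-1} b_{k⃗−e_i} if k_i ≤ 0. Here e_i is the i-th standard basis vector of ℤⁿ, the powers q_i^{m} for m ∈ ℤ are taken in the group of units of k, and (q_i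 − 1)^{-1}(c z_i − 1) denotes the scalar (q_i − 1)^{-1} ∈ k times the element c·z_i − 1 of 𝒜ₙ^{q,Λ}. -/
/-- The basis element `b_{k⃗} = b_{k⃗,1} ⋯ b_{k⃗,n}` of `𝒜ₙ^{q,Λ}` attached to `k⃗ ∈ ℤⁿ`,
where `b_{k⃗,i} = x_i^{k_i}` if `k_i ≥ 0` and `b_{k⃗,i} = y_i^{-k_i}` if `k_i ≤ 0`. -/
def ajB (k : Type*) [Field k] (n : ℕ) (q : Fin n → k) (Λ : Fin n → Fin n → k)
    (kv : Fin n → ℤ) : AJWeyl k n q Λ :=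
  ((List.finRange n).map (fun i =>
    if 0 ≤ kv i then ajX k n q Λ i ^ (kv i).toNat
    else ajY k n q Λ i ^ (-(kv i)).toNat)).prod

namespace AJAux

variable {k : Type*} [Field k] {n : ℕ} (q : Fin n → k) (Λ : Fin n → Fin n → k)

local notation "X" => ajX k n q Λ
local notation "Y" => ajY k n q Λ
local notation "Z" => ajZ k n q Λ

lemma rel_eq {a b} (h : AJRel k n q Λ a b) :
    RingQuot.mkAlgHom k (AJRel k n q Λ) a = RingQuot.mkAlgHom k (AJRel k n q Λ) b :=
  RingQuot.mkAlgHom_rel k h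

lemma xx {i j : Fin n} (h : i < j) : X i * X j = Λ i j • (X j * X i) := by
  simpa [ajX, map_mul, map_smul] using rel_eq q Λ (AJRel.xx h)

lemma yy {i j : Fin n} (h : i < j) : Y i * Y j = Λ i j • (Y j * Y i) := by
  simpa [ajY, map_mul, map_smul] using rel_eq q Λ (AJRel.yy h)

lemma xy {i j : Fin n} (h : i < j) : X i * Y j = (Λ i j)⁻¹ • (Y j * X i) := by
  simpa [ajX, ajY, map_mul, map_smul] using rel_eq q Λ (AJRel.xy h)

lemma yx {i j : Fin n} (h : i < j) : Y i * X j = (Λ i j)⁻¹ • (X j * Y i) := by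
  simpa [ajX, ajY, map_mul, map_smul] using rel_eq q Λ (AJRel.yx h)

lemma xyi (i : Fin n) : X i * Y i = q i • (Y i * X i) + 1 := by
  simpa [ajX, ajY, map_mul, map_smul, map_add, map_one] using rel_eq q Λ (AJRel.xyi i)

end AJAux

namespace AJAux

variable {k : Type*} [Field k] {n : ℕ} {q : Fin n → k} {Λ : Fin n → Fin n → k}
variable (hq : ∀ i, q i ≠ 0) (hq1 : ∀ i, q i ≠ 1) (hΛ : ∀ i j, Λ i j ≠ 0)
variable (hΛs : ∀ i j, Λ i j * Λ j i = 1)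

local notation "X" => ajX k n q Λ
local notation "Y" => ajY k n q Λ
local notation "Z" => ajZ k n q Λ

include hΛs in
lemma xx' {i j : Fin n} (h : j ≠ i) : X i * X j = Λ i j • (X j * X i) := by
  rcases lt_or_gt_of_ne h with hlt | hlt
  · rw [xx q Λ hlt, smul_smul, hΛs, one_smul]
  · exact xx q Λ hlt

include hΛs in
lemma yy' {i j : Fin n} (h : j ≠ i) : Y i * Y j = Λ i j • (Y j * Y i) := by
  rcases lt_or_gt_of_ne h with hlt | hlt
  · rw [yy q Λ hlt, smul_smul, hΛs, one_smul]
  · exact yy q Λ hlt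

include hΛs in
lemma xy' {i j : Fin n} (h : j ≠ i) : X i * Y j = (Λ i j)⁻¹ • (Y j * X i) := by
  rcases lt_or_gt_of_ne h with hlt | hlt
  · rw [yx q Λ hlt, smul_smul, ← mul_inv_rev, hΛs j i, inv_one, one_smul]
  · exact xy q Λ hlt

include hΛs in
lemma yx' {i j : Fin n} (h : j ≠ i) : Y i * X j = (Λ i j)⁻¹ • (X j * Y i) := by
  rcases lt_or_gt_of_ne h with hlt | hlt
  · rw [xy q Λ hlt, smul_smul, ← mul_inv_rev, hΛs j i, inv_one, one_smul]
  · exact yx q Λ hlt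

lemma zEq (i : Fin n) : Z i = (q i - 1) • (Y i * X i) + 1 := by
  rw [ajZ, xyi]; module

include hΛs hΛ in
lemma z_comm_x {i j : Fin n} (h : j ≠ i) : Z i * X j = X j * Z i := by
  rw [ajZ, sub_mul, mul_sub]
  congr 1
  · rw [mul_assoc, yx' hΛs h, mul_smul_comm, ← mul_assoc, xx' hΛs h, smul_mul_assoc,
      smul_smul, inv_mul_cancel₀ (hΛ i j), one_smul, mul_assoc]
  · rw [mul_assoc, xx' hΛs h, mul_smul_comm, ← mul_assoc, yx' hΛs h, smul_mul_assoc,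
      smul_smul, mul_inv_cancel₀ (hΛ i j), one_smul, mul_assoc]

include hΛs hΛ in
lemma z_comm_y {i j : Fin n} (h : j ≠ i) : Z i * Y j = Y j * Z i := by
  rw [ajZ, sub_mul, mul_sub]
  congr 1
  · rw [mul_assoc, yy' hΛs h, mul_smul_comm, ← mul_assoc, xy' hΛs h, smul_mul_assoc,
      smul_smul, mul_inv_cancel₀ (hΛ i j), one_smul, mul_assoc]
  · rw [mul_assoc, xy' hΛs h, mul_smul_comm, ← mul_assoc, yy' hΛs h, smul_mul_assoc,
      smul_smul, inv_mul_cancel₀ (hΛ i j), one_smul, mul_assoc]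

end AJAux

namespace AJAux

section generic
variable {k : Type*} [CommSemiring k] {S : Type*} [Semiring S] [Algebra k S]

lemma mul_pow_of_comm {u v : S} {c : k} (h : u * v = c • (v * u)) (m : ℕ) :
    u * v ^ m = c ^ m • (v ^ m * u) := by
  induction m with
  | zero => simp
  | succ m ih =>
    rw [pow_succ', ← mul_assoc, h, smul_mul_assoc, mul_assoc, ih, mul_smul_comm,
      smul_smul, ← pow_succ', ← mul_assoc, pow_succ']

lemma mul_listProd_of_comm {α : Type*} {u : S} {l : List α} {F : α → S} {c : α → k}
    (h : ∀ a ∈ l, u * F a = c a • (F a * u)) :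
    u * (l.map F).prod = (l.map c).prod • ((l.map F).prod * u) := by
  induction l with
  | nil => simp
  | cons a l ih =>
    simp only [List.map_cons, List.prod_cons]
    rw [← mul_assoc, h a (by simp), smul_mul_assoc, mul_assoc,
      ih (fun b hb => h b (List.mem_cons_of_mem _ hb)),
      mul_smul_comm, smul_smul, ← mul_assoc]

lemma mul_listProd_of_central {α : Type*} {u : S} {l : List α} {F : α → S}
    (h : ∀ a ∈ l, u * F a = F a * u) :
    u * (l.map F).prod = (l.map F).prod * u := by
  induction l with
  | nil => simp
  | cons a l ih =>
    simp only [List.map_cons, List.prod_cons]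
    rw [← mul_assoc, h a (by simp), mul_assoc,
      ih (fun b hb => h b (List.mem_cons_of_mem _ hb)), ← mul_assoc]

end generic

variable {k : Type*} [Field k] {n : ℕ} {q : Fin n → k} {Λ : Fin n → Fin n → k}
variable (hq : ∀ i, q i ≠ 0) (hq1 : ∀ i, q i ≠ 1) (hΛ : ∀ i j, Λ i j ≠ 0)
variable (hΛs : ∀ i j, Λ i j * Λ j i = 1)

local notation "X" => ajX k n q Λ
local notation "Y" => ajY k n q Λ
local notation "Z" => ajZ k n q Λ


include hq1 in
lemma x_mul_ypow (i : Fin n) (m : ℕ) :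
    X i * Y i ^ (m + 1) = (q i ^ (m + 1)) • (Y i ^ (m + 1) * X i)
      + ((q i ^ (m + 1) - 1) / (q i - 1)) • Y i ^ m := by
  have hq1' : q i - 1 ≠ 0 := sub_ne_zero.mpr (hq1 i)
  induction m with
  | zero =>
    simp only [zero_add, pow_one, pow_zero]
    rw [xyi, div_self hq1']
    simp
  | succ m ih =>
    have h2 : Y i ^ (m + 2) = Y i * Y i ^ (m + 1) := (pow_succ' _ _)
    rw [h2, ← mul_assoc, xyi, add_mul, smul_mul_assoc, one_mul, mul_assoc, ih,
      mul_add, mul_smul_comm, mul_smul_comm, ← mul_assoc, ← pow_succ', ← pow_succ']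
    match_scalars
    · ring
    · field_simp; ring

include hq1 hq in
lemma y_mul_xpow (i : Fin n) (m : ℕ) :
    Y i * X i ^ (m + 1) = ((q i)⁻¹ ^ (m + 1)) • (X i ^ (m + 1) * Y i)
      - ((1 - (q i)⁻¹ ^ (m + 1)) / (q i - 1)) • X i ^ m := by
  have hq1' : q i - 1 ≠ 0 := sub_ne_zero.mpr (hq1 i)
  have hq0 : q i ≠ 0 := hq i
  have hyx : Y i * X i = (q i)⁻¹ • (X i * Y i) - (q i)⁻¹ • 1 := by
    rw [xyi]
    match_scalars
    · field_simp
    · field_simp; ring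
  induction m with
  | zero =>
    simp only [zero_add, pow_one, pow_zero]
    rw [hyx]
    match_scalars
    · ring
    · field_simp
  | succ m ih =>
    have hpm : q i ^ (m + 1) ≠ 0 := pow_ne_zero _ hq0
    have hx : X i ^ (m + 2) = X i * X i ^ (m + 1) := (pow_succ' _ _)
    rw [hx, ← mul_assoc, hyx, sub_mul, smul_mul_assoc, smul_mul_assoc, one_mul,
      mul_assoc, ih, mul_sub, mul_smul_comm, mul_smul_comm, ← mul_assoc,
      ← pow_succ', ← pow_succ']
    match_scalars
    · ring
    · field_simp; linear_combination (-(q i)⁻¹ * (q i)⁻¹ ^ m) * mul_inv_cancel₀ hq0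

end AJAux

namespace AJAux

variable {k : Type*} [Field k] {n : ℕ} {q : Fin n → k} {Λ : Fin n → Fin n → k}
variable (hq : ∀ i, q i ≠ 0) (hq1 : ∀ i, q i ≠ 1) (hΛ : ∀ i j, Λ i j ≠ 0)
variable (hΛs : ∀ i j, Λ i j * Λ j i = 1)

local notation "X" => ajX k n q Λ
local notation "Y" => ajY k n q Λ
local notation "Z" => ajZ k n q Λ

include hq1 in
lemma x_mul_ypow_z (i : Fin n) (m : ℕ) :
    X i * Y i ^ (m + 1) = Y i ^ m * ((q i - 1)⁻¹ • ((q i ^ (m + 1) : k) • Z i - 1)) := by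
  have hq1' : q i - 1 ≠ 0 := sub_ne_zero.mpr (hq1 i)
  rw [x_mul_ypow hq1, zEq]
  have h1 : Y i ^ (m + 1) * X i = Y i ^ m * (Y i * X i) := by rw [pow_succ, mul_assoc]
  rw [h1]
  simp only [smul_sub, smul_add, smul_smul, mul_sub, mul_add, mul_smul_comm, mul_one]
  match_scalars
  · field_simp
  · field_simp

include hq hq1 in
lemma y_mul_xpow_z (i : Fin n) (m : ℕ) :
    Y i * X i ^ (m + 1) = X i ^ m * ((q i - 1)⁻¹ • ((q i ^ (-(m : ℤ)) : k) • Z i - 1)) := by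
  have hq1' : q i - 1 ≠ 0 := sub_ne_zero.mpr (hq1 i)
  have hq0 : q i ≠ 0 := hq i
  have hpm : q i ^ m ≠ 0 := pow_ne_zero _ hq0
  have hz : (q i ^ (-(m : ℤ)) : k) = (q i)⁻¹ ^ m := by
    rw [zpow_neg, zpow_natCast, inv_pow]
  rw [y_mul_xpow hq hq1, zEq, hz]
  have h1 : X i ^ (m + 1) * Y i = X i ^ m * (X i * Y i) := by rw [pow_succ, mul_assoc]
  rw [h1, xyi]
  simp only [smul_sub, smul_add, smul_smul, mul_sub, mul_add, mul_smul_comm, mul_one]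
  match_scalars
  · field_simp; linear_combination (q i)⁻¹ ^ m * mul_inv_cancel₀ hq0
  · field_simp; linear_combination (q i)⁻¹ ^ m * mul_inv_cancel₀ hq0

/-- The `j`-th factor of `ajB`. -/
def Bfac (kv : Fin n → ℤ) (j : Fin n) : AJWeyl k n q Λ :=
  if 0 ≤ kv j then X j ^ (kv j).toNat else Y j ^ (-(kv j)).toNat

lemma ajB_eq (kv : Fin n → ℤ) :
    ajB k n q Λ kv = ((List.finRange n).map (Bfac kv)).prod := rfl

lemma bfac_congr {kv kv' : Fin n → ℤ} {j : Fin n} (h : kv j = kv' j) :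
    Bfac (q := q) (Λ := Λ) kv j = Bfac kv' j := by simp [Bfac, h]

lemma bfac_pos_eq {kv : Fin n → ℤ} {j : Fin n} {m : ℕ} (h : kv j = (m : ℤ)) :
    Bfac (q := q) (Λ := Λ) kv j = X j ^ m := by
  simp [Bfac, h]

lemma bfac_neg_eq {kv : Fin n → ℤ} {j : Fin n} {m : ℕ} (h : kv j = -(m : ℤ)) :
    Bfac (q := q) (Λ := Λ) kv j = Y j ^ m := by
  by_cases h0 : 0 ≤ kv j
  · have hm : m = 0 := by omega
    simp [Bfac, h0, h, hm]
  · have : (-kv j).toNat = m := by omega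
    simp [Bfac, h0, this]

include hΛs in
lemma x_comm_bfac {i j : Fin n} (hij : j ≠ i) (kv : Fin n → ℤ) :
    X i * Bfac kv j = (Λ i j ^ (kv j)) • (Bfac kv j * X i) := by
  by_cases h : 0 ≤ kv j
  · rw [show Bfac (q := q) (Λ := Λ) kv j = X j ^ (kv j).toNat from if_pos h,
      mul_pow_of_comm (xx' hΛs hij), ← zpow_natCast, Int.toNat_of_nonneg h]
  · have hm : ((-kv j).toNat : ℤ) = -(kv j) := by omega
    rw [show Bfac (q := q) (Λ := Λ) kv j = Y j ^ (-(kv j)).toNat from if_neg h,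
      mul_pow_of_comm (xy' hΛs hij), inv_pow, ← zpow_natCast, hm, ← zpow_neg, neg_neg]

include hΛs in
lemma y_comm_bfac {i j : Fin n} (hij : j ≠ i) (kv : Fin n → ℤ) :
    Y i * Bfac kv j = (Λ i j ^ (kv j))⁻¹ • (Bfac kv j * Y i) := by
  by_cases h : 0 ≤ kv j
  · rw [show Bfac (q := q) (Λ := Λ) kv j = X j ^ (kv j).toNat from if_pos h,
      mul_pow_of_comm (yx' hΛs hij), inv_pow, ← zpow_natCast, Int.toNat_of_nonneg h]
  · have hm : ((-kv j).toNat : ℤ) = -(kv j) := by omega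
    rw [show Bfac (q := q) (Λ := Λ) kv j = Y j ^ (-(kv j)).toNat from if_neg h,
      mul_pow_of_comm (yy' hΛs hij), ← zpow_natCast, hm, zpow_neg]

include hΛ hΛs in
lemma z_comm_bfac {i j : Fin n} (hij : j ≠ i) (kv : Fin n → ℤ) :
    Z i * Bfac kv j = Bfac kv j * Z i := by
  unfold Bfac
  split
  · exact (Commute.pow_right (z_comm_x hΛ hΛs hij) _)
  · exact (Commute.pow_right (z_comm_y hΛ hΛs hij) _)

lemma wfac_comm {u : AJWeyl k n q Λ} {i : Fin n} (h : Z i * u = u * Z i) (c c' : k) :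
    (c' • (c • Z i - 1)) * u = u * (c' • (c • Z i - 1)) := by
  rw [smul_mul_assoc, mul_smul_comm, sub_mul, mul_sub, smul_mul_assoc, mul_smul_comm, h,
    one_mul, mul_one]

end AJAux

namespace AJAux

lemma finRange_split {n : ℕ} (i : Fin n) :
    List.finRange n = (List.finRange n).take i.val ++ i :: (List.finRange n).drop (i.val + 1) := by
  conv_lhs => rw [← List.take_append_drop i.val (List.finRange n)]
  congr 1
  rw [List.drop_eq_getElem_cons (by simp [i.isLt])]
  congr 1
  simp

lemma mem_take_finRange {n : ℕ} {i j : Fin n} :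
    j ∈ (List.finRange n).take i.val ↔ j < i := by
  rw [List.mem_iff_getElem]
  constructor
  · rintro ⟨m, hm, rfl⟩
    simp only [List.length_take, List.length_finRange, lt_min_iff] at hm
    simp only [List.getElem_take, List.getElem_finRange]
    exact hm.1
  · intro hj
    refine ⟨j.val, ?_, ?_⟩
    · simp only [List.length_take, List.length_finRange, lt_min_iff]
      exact ⟨hj, j.isLt⟩
    · simp [List.getElem_take]

lemma mem_drop_finRange {n : ℕ} {i j : Fin n}
    (h : j ∈ (List.finRange n).drop (i.val + 1)) : i < j := by
  obtain ⟨m, hm, he⟩ := List.mem_iff_getElem.mp h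
  rw [List.getElem_drop] at he
  subst he
  simp only [List.getElem_finRange]
  simp [Fin.lt_def]
  omega

lemma prod_take {k : Type*} [CommMonoid k] {n : ℕ} (i : Fin n) (f : Fin n → k) :
    ∏ j ∈ Finset.univ.filter (fun j => j < i), f j
      = (((List.finRange n).take i.val).map f).prod := by
  rw [← List.prod_toFinset f (((List.nodup_finRange n).sublist (List.take_sublist _ _)))]
  congr 1
  ext j
  simp [mem_take_finRange]

end AJAux


open AJAux


/-- Lemma 3.1.2: the formulas for multiplication of the basis elements `b_{k⃗}` by the
generators `x_i` and `y_i` of `𝒜ₙ^{q,Λ}`. -/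
theorem aj_x_y_mul_b {k : Type*} [Field k] {n : ℕ}
    (q : Fin n → k) (Λ : Fin n → Fin n → k)
    (hq : ∀ i, q i ≠ 0) (hq1 : ∀ i, q i ≠ 1) (hΛ : ∀ i j, Λ i j ≠ 0) (hΛd : ∀ i, Λ i i = 1)
    (hΛs : ∀ i j, Λ i j * Λ j i = 1) :
    ∀ (kv : Fin n → ℤ) (i : Fin n),
      (0 ≤ kv i → ajX k n q Λ i * ajB k n q Λ kv =
        (∏ j ∈ Finset.univ.filter (fun j => j < i), Λ i j ^ (kv j)) •
          ajB k n q Λ (kv + Pi.single i 1)) ∧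
      (kv i < 0 → ajX k n q Λ i * ajB k n q Λ kv =
        (∏ j ∈ Finset.univ.filter (fun j => j < i), Λ i j ^ (kv j)) •
          (ajB k n q Λ (kv + Pi.single i 1) *
            ((q i - 1)⁻¹ • ((q i ^ (-(kv i))) • ajZ k n q Λ i - 1)))) ∧
      (0 < kv i → ajY k n q Λ i * ajB k n q Λ kv =
        (∏ j ∈ Finset.univ.filter (fun j => j < i), Λ i j ^ (kv j))⁻¹ •
          (ajB k n q Λ (kv - Pi.single i 1) *
            ((q i - 1)⁻¹ • ((q i ^ (-(kv i) + 1)) • ajZ k n q Λ i - 1)))) ∧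
      (kv i ≤ 0 → ajY k n q Λ i * ajB k n q Λ kv =
        (∏ j ∈ Finset.univ.filter (fun j => j < i), Λ i j ^ (kv j))⁻¹ •
          ajB k n q Λ (kv - Pi.single i 1)) := by
  intro kv i
  classical
  have hsplit : ∀ kv' : Fin n → ℤ, ajB k n q Λ kv' =
      (((List.finRange n).take i.val).map (Bfac kv')).prod *
        (Bfac kv' i * (((List.finRange n).drop (i.val + 1)).map (Bfac kv')).prod) := by
    intro kv'
    rw [ajB_eq]
    conv_lhs => rw [finRange_split i]
    rw [List.map_append, List.prod_append, List.map_cons, List.prod_cons]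
  have hTmem : ∀ j ∈ (List.finRange n).take i.val, j ≠ i :=
    fun j hj => ne_of_lt (mem_take_finRange.mp hj)
  have hDmem : ∀ j ∈ (List.finRange n).drop (i.val + 1), j ≠ i :=
    fun j hj => (mem_drop_finRange hj).ne'
  have hTmapP : ((List.finRange n).take i.val).map (Bfac (kv + Pi.single i 1))
      = ((List.finRange n).take i.val).map (Bfac (q := q) (Λ := Λ) kv) :=
    List.map_congr_left fun j hj =>
      bfac_congr (by simp [Pi.single_eq_of_ne (hTmem j hj)])
  have hDmapP : ((List.finRange n).drop (i.val + 1)).map (Bfac (kv + Pi.single i 1))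
      = ((List.finRange n).drop (i.val + 1)).map (Bfac (q := q) (Λ := Λ) kv) :=
    List.map_congr_left fun j hj =>
      bfac_congr (by simp [Pi.single_eq_of_ne (hDmem j hj)])
  have hTmapM : ((List.finRange n).take i.val).map (Bfac (kv - Pi.single i 1))
      = ((List.finRange n).take i.val).map (Bfac (q := q) (Λ := Λ) kv) :=
    List.map_congr_left fun j hj =>
      bfac_congr (by simp [Pi.single_eq_of_ne (hTmem j hj)])
  have hDmapM : ((List.finRange n).drop (i.val + 1)).map (Bfac (kv - Pi.single i 1))
      = ((List.finRange n).drop (i.val + 1)).map (Bfac (q := q) (Λ := Λ) kv) :=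
    List.map_congr_left fun j hj =>
      bfac_congr (by simp [Pi.single_eq_of_ne (hDmem j hj)])
  have hxT : ajX k n q Λ i * (((List.finRange n).take i.val).map (Bfac kv)).prod
      = ((((List.finRange n).take i.val).map (fun j => Λ i j ^ (kv j))).prod) •
        ((((List.finRange n).take i.val).map (Bfac kv)).prod * ajX k n q Λ i) :=
    mul_listProd_of_comm (fun j hj => x_comm_bfac hΛs (hTmem j hj) kv)
  have hyT : ajY k n q Λ i * (((List.finRange n).take i.val).map (Bfac kv)).prod
      = ((((List.finRange n).take i.val).map (fun j => (Λ i j ^ (kv j))⁻¹)).prod) •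
        ((((List.finRange n).take i.val).map (Bfac kv)).prod * ajY k n q Λ i) :=
    mul_listProd_of_comm (fun j hj => y_comm_bfac hΛs (hTmem j hj) kv)
  have hscal : (∏ j ∈ Finset.univ.filter (fun j => j < i), Λ i j ^ (kv j))
      = (((List.finRange n).take i.val).map (fun j => Λ i j ^ (kv j))).prod :=
    prod_take i _
  have hinv : (∏ j ∈ Finset.univ.filter (fun j => j < i), Λ i j ^ (kv j))⁻¹
      = (((List.finRange n).take i.val).map (fun j => (Λ i j ^ (kv j))⁻¹)).prod := by
    rw [hscal]
    have := map_list_prod (invMonoidHom : k →* k)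
      (((List.finRange n).take i.val).map (fun j => Λ i j ^ (kv j)))
    simpa [List.map_map, Function.comp_def] using this
  have hWD : ∀ c : k, ((q i - 1)⁻¹ • (c • ajZ k n q Λ i - 1)) *
        (((List.finRange n).drop (i.val + 1)).map (Bfac kv)).prod
      = (((List.finRange n).drop (i.val + 1)).map (Bfac kv)).prod *
        ((q i - 1)⁻¹ • (c • ajZ k n q Λ i - 1)) := by
    intro c
    exact mul_listProd_of_central (fun j hj =>
      wfac_comm (z_comm_bfac hΛ hΛs (hDmem j hj) kv) c (q i - 1)⁻¹)
  refine ⟨?_, ?_, ?_, ?_⟩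
  · -- x, 0 ≤ kv i
    intro hki
    have hmid : ajX k n q Λ i * Bfac kv i = Bfac (kv + Pi.single i 1) i := by
      rw [bfac_pos_eq (m := (kv i).toNat) (by omega),
        bfac_pos_eq (kv := kv + Pi.single i 1) (m := (kv i).toNat + 1)
          (by simp [Pi.single_eq_same]; omega), pow_succ']
    rw [hsplit kv, hsplit (kv + Pi.single i 1), hTmapP, hDmapP, hscal,
      ← mul_assoc, hxT, smul_mul_assoc]
    congr 1
    rw [mul_assoc, ← mul_assoc (ajX k n q Λ i), hmid]
  · -- x, kv i < 0
    intro hki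
    obtain ⟨m, hm⟩ : ∃ m : ℕ, (-(kv i)).toNat = m + 1 := ⟨(-(kv i)).toNat - 1, by omega⟩
    have hexp : (q i ^ (-(kv i)) : k) = q i ^ (m + 1) := by
      rw [show -(kv i) = ((m + 1 : ℕ) : ℤ) by omega, zpow_natCast]
    have hBi : Bfac (q := q) (Λ := Λ) kv i = ajY k n q Λ i ^ (m + 1) :=
      bfac_neg_eq (by omega)
    have hBi' : Bfac (q := q) (Λ := Λ) (kv + Pi.single i 1) i = ajY k n q Λ i ^ m :=
      bfac_neg_eq (by simp [Pi.single_eq_same]; omega)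
    rw [hsplit kv, hsplit (kv + Pi.single i 1), hTmapP, hDmapP, hscal, hexp,
      ← mul_assoc, hxT, smul_mul_assoc, hBi, hBi']
    congr 1
    rw [mul_assoc, ← mul_assoc (ajX k n q Λ i), x_mul_ypow_z hq1]
    simp only [mul_assoc]
    rw [hWD]
  · -- y, 0 < kv i
    intro hki
    obtain ⟨m, hm⟩ : ∃ m : ℕ, (kv i).toNat = m + 1 := ⟨(kv i).toNat - 1, by omega⟩
    have hexp : (q i ^ (-(kv i) + 1) : k) = q i ^ (-(m : ℤ)) := by
      congr 1; omega
    have hBi : Bfac (q := q) (Λ := Λ) kv i = ajX k n q Λ i ^ (m + 1) :=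
      bfac_pos_eq (by omega)
    have hBi' : Bfac (q := q) (Λ := Λ) (kv - Pi.single i 1) i = ajX k n q Λ i ^ m :=
      bfac_pos_eq (by simp [Pi.single_eq_same]; omega)
    rw [hsplit kv, hsplit (kv - Pi.single i 1), hTmapM, hDmapM, hinv, hexp,
      ← mul_assoc, hyT, smul_mul_assoc, hBi, hBi']
    congr 1
    rw [mul_assoc, ← mul_assoc (ajY k n q Λ i), y_mul_xpow_z hq hq1]
    simp only [mul_assoc]
    rw [hWD]
  · -- y, kv i ≤ 0
    intro hki
    have hmid : ajY k n q Λ i * Bfac kv i = Bfac (kv - Pi.single i 1) i := by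
      rw [bfac_neg_eq (m := (-(kv i)).toNat) (by omega),
        bfac_neg_eq (kv := kv - Pi.single i 1) (m := (-(kv i)).toNat + 1)
          (by simp [Pi.single_eq_same]; omega), pow_succ']
    rw [hsplit kv, hsplit (kv - Pi.single i 1), hTmapM, hDmapM, hinv,
      ← mul_assoc, hyT, smul_mul_assoc]
    congr 1
    rw [mul_assoc, ← mul_assoc (ajY k n q Λ i), hmid]
end
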